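/- arXiv:math/0109008 — 3 statements merged into one kernel-verified Lean document; each statement's English description precedes it below -/
import Mathlib

section
/- Let T and F be nonnegative n×n matrices with ρ(T) < 1, F ≠ 0, and T + F irreducible. Set Q = F(I−T)^{-1} and R₀ = ρ(Q). Then R₀ > 0 and ρ(T + F/R₀) = 1. -/
open Matrix Filter Topology

noncomputable def specRad {n : ℕ} (A : Matrix (Fin n) (Fin n) ℝ) : ℝ :=
  (spectralRadius ℂ (A.map Complex.ofReal)).toReal

def MatIrred {n : ℕ} (A : Matrix (Fin n) (Fin n) ℝ) : Prop :=
  ∀ i j, ∃ k : ℕ, 0 < k ∧ 0 < (A ^ k) i j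

def MatPrimitive {n : ℕ} (A : Matrix (Fin n) (Fin n) ℝ) : Prop :=
  ∃ k : ℕ, 0 < k ∧ ∀ i j, 0 < (A ^ k) i j

open scoped NNReal ENNReal
set_option maxHeartbeats 1000000
set_option synthInstance.maxHeartbeats 1000000

attribute [local instance] Matrix.linftyOpNormedRing Matrix.linftyOpNormedAlgebra

variable {n : ℕ}

noncomputable abbrev cm (A : Matrix (Fin n) (Fin n) ℝ) : Matrix (Fin n) (Fin n) ℂ :=
  A.map Complex.ofReal

instance : CompleteSpace (Matrix (Fin n) (Fin n) ℂ) := FiniteDimensional.complete ℂ _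

lemma cm_pow (A : Matrix (Fin n) (Fin n) ℝ) (k : ℕ) : cm (A ^ k) = (cm A) ^ k :=
  map_pow (Complex.ofRealHom.mapMatrix) A k

lemma specRad_lt_top (A : Matrix (Fin n) (Fin n) ℝ) : spectralRadius ℂ (cm A) ≠ ⊤ := by
  refine ((spectrum.spectralRadius_le_pow_nnnorm_pow_one_div ℂ (cm A) 0).trans_lt ?_).ne
  exact ENNReal.mul_lt_top (ENNReal.rpow_lt_top_of_nonneg (by norm_num) ENNReal.coe_ne_top)
    (ENNReal.rpow_lt_top_of_nonneg (by norm_num) ENNReal.coe_ne_top)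

lemma gelfand (A : Matrix (Fin n) (Fin n) ℝ) :
    Tendsto (fun k : ℕ => ‖cm (A ^ k)‖ ^ (1 / (k:ℝ))) atTop (𝓝 (specRad A)) := by
  have h := spectrum.pow_nnnorm_pow_one_div_tendsto_nhds_spectralRadius (cm A)
  have h2 := (ENNReal.tendsto_toReal (specRad_lt_top A)).comp h
  refine h2.congr fun k => ?_
  simp only [Function.comp_apply]
  rw [← ENNReal.toReal_rpow, cm_pow]
  simp [ENNReal.coe_toReal, coe_nnnorm]

lemma specRad_nonneg (A : Matrix (Fin n) (Fin n) ℝ) : 0 ≤ specRad A := ENNReal.toReal_nonneg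

lemma nnnorm_cm (A : Matrix (Fin n) (Fin n) ℝ) :
    ‖cm A‖₊ = (Finset.univ : Finset (Fin n)).sup fun i => ∑ j, ‖A i j‖₊ := by
  rw [Matrix.linfty_opNNNorm_def]
  refine congrArg _ (funext fun i => Finset.sum_congr rfl fun j _ => ?_)
  simp [cm, Matrix.map_apply]

lemma entry_le_norm_cm (A : Matrix (Fin n) (Fin n) ℝ) (i j : Fin n) : |A i j| ≤ ‖cm A‖ := by
  have ha : (‖A i j‖₊ : ℝ≥0) ≤ ∑ j', ‖A i j'‖₊ :=
    Finset.single_le_sum (f := fun j' => ‖A i j'‖₊) (fun _ _ => zero_le) (Finset.mem_univ j)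
  have hb : (∑ j', ‖A i j'‖₊) ≤ (Finset.univ : Finset (Fin n)).sup fun i => ∑ j', ‖A i j'‖₊ :=
    Finset.le_sup (f := fun i => ∑ j', ‖A i j'‖₊) (Finset.mem_univ i)
  have h1 : ‖A i j‖₊ ≤ ‖cm A‖₊ := by rw [nnnorm_cm]; exact ha.trans hb
  have := NNReal.coe_le_coe.2 h1
  simpa [Real.norm_eq_abs] using this

lemma norm_cm_le {A B : Matrix (Fin n) (Fin n) ℝ} (h : ∀ i j, |A i j| ≤ |B i j|) :
    ‖cm A‖ ≤ ‖cm B‖ := by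
  have h1 : ‖cm A‖₊ ≤ ‖cm B‖₊ := by
    rw [nnnorm_cm, nnnorm_cm]
    refine Finset.sup_mono_fun fun i _ => Finset.sum_le_sum fun j _ => ?_
    have := h i j
    rw [← Real.norm_eq_abs, ← Real.norm_eq_abs] at this
    exact_mod_cast this
  exact_mod_cast h1

lemma entry_pow_nonneg {A : Matrix (Fin n) (Fin n) ℝ} (hA : ∀ i j, 0 ≤ A i j) (k : ℕ) :
    ∀ i j, 0 ≤ (A ^ k) i j := by
  induction k with
  | zero => intro i j; by_cases h : i = j <;> simp [pow_zero, Matrix.one_apply, h]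
  | succ k ih =>
    intro i j
    rw [pow_succ, Matrix.mul_apply]
    exact Finset.sum_nonneg fun l _ => mul_nonneg (ih i l) (hA l j)

lemma entry_pow_mono {A B : Matrix (Fin n) (Fin n) ℝ} (hA : ∀ i j, 0 ≤ A i j)
    (hAB : ∀ i j, A i j ≤ B i j) (k : ℕ) : ∀ i j, (A ^ k) i j ≤ (B ^ k) i j := by
  have hB : ∀ i j, 0 ≤ B i j := fun i j => le_trans (hA i j) (hAB i j)
  induction k with
  | zero => intro i j; simp
  | succ k ih =>
    intro i j
    rw [pow_succ, pow_succ, Matrix.mul_apply, Matrix.mul_apply]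
    refine Finset.sum_le_sum fun l _ => mul_le_mul (ih i l) (hAB l j) (hA l j)
      (entry_pow_nonneg hB k i l)

lemma specRad_mono {A B : Matrix (Fin n) (Fin n) ℝ} (hA : ∀ i j, 0 ≤ A i j)
    (hAB : ∀ i j, A i j ≤ B i j) : specRad A ≤ specRad B := by
  refine le_of_tendsto_of_tendsto' (gelfand A) (gelfand B) fun k => ?_
  refine Real.rpow_le_rpow (norm_nonneg _) (norm_cm_le fun i j => ?_) (by positivity)
  have h1 := entry_pow_nonneg hA k i j
  have h2 := entry_pow_mono hA hAB k i j
  have h3 : 0 ≤ (B ^ k) i j := le_trans h1 h2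
  rw [abs_of_nonneg h1, abs_of_nonneg h3]
  exact h2

lemma specRad_smul (A : Matrix (Fin n) (Fin n) ℝ) {c : ℝ} (hc : 0 ≤ c) :
    specRad (c • A) = c * specRad A := by
  have h2 : Tendsto (fun k : ℕ => c * ‖cm (A ^ k)‖ ^ (1 / (k:ℝ))) atTop (𝓝 (c * specRad A)) :=
    (gelfand A).const_mul c
  refine tendsto_nhds_unique ((gelfand (c • A)).congr' ?_) h2
  filter_upwards [eventually_ge_atTop 1] with k hk
  have hsm : cm ((c • A) ^ k) = (c ^ k : ℂ) • cm (A ^ k) := by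
    rw [smul_pow]
    ext i j
    simp [cm, Matrix.map_apply, Matrix.smul_apply]
  rw [hsm, norm_smul]
  have hnc : ‖((c : ℂ)) ^ k‖ = c ^ k := by
    rw [norm_pow, Complex.norm_real, Real.norm_eq_abs, abs_of_nonneg hc]
  rw [hnc, Real.mul_rpow (pow_nonneg hc k) (norm_nonneg _)]
  congr 1
  rw [← Real.rpow_natCast c k, ← Real.rpow_mul hc]
  rw [mul_one_div, div_self (by exact_mod_cast Nat.one_le_iff_ne_zero.mp hk), Real.rpow_one]

lemma specRad_le_one_of_bounded {A : Matrix (Fin n) (Fin n) ℝ} (hA : ∀ i j, 0 ≤ A i j)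
    (C : ℝ) (hC : ∀ k i j, (A ^ k) i j ≤ C) : specRad A ≤ 1 := by
  set D : ℝ := max ((n : ℝ)^2 * max C 1) 1 with hD
  have hD1 : 1 ≤ D := le_max_right _ _
  have hD0 : 0 < D := lt_of_lt_of_le one_pos hD1
  have hbd : ∀ k, ‖cm (A ^ k)‖ ≤ D := by
    intro k
    have h1 : ‖cm (A ^ k)‖₊ ≤ ∑ i, ∑ j, ‖(A ^ k) i j‖₊ := by
      rw [nnnorm_cm]
      exact Finset.sup_le fun i _ => Finset.single_le_sum
        (f := fun i => ∑ j, ‖(A ^ k) i j‖₊) (by simp) (Finset.mem_univ i)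
    have h2 : (‖cm (A ^ k)‖ : ℝ) ≤ ∑ i, ∑ j : Fin n, ‖(A ^ k) i j‖ := by
      have := NNReal.coe_le_coe.2 h1
      rw [coe_nnnorm] at this
      refine this.trans (le_of_eq ?_)
      push_cast
      rfl
    have h3 : ∑ i, ∑ j : Fin n, ‖(A ^ k) i j‖ ≤ ∑ _i : Fin n, ∑ _j : Fin n, max C 1 := by
      refine Finset.sum_le_sum fun i _ => Finset.sum_le_sum fun j _ => ?_
      rw [Real.norm_eq_abs, abs_of_nonneg (entry_pow_nonneg hA k i j)]
      exact le_trans (hC k i j) (le_max_left _ _)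
    refine h2.trans (h3.trans ?_)
    simp only [Finset.sum_const, Finset.card_univ, Fintype.card_fin, nsmul_eq_mul]
    calc (n : ℝ) * ((n:ℝ) * max C 1) = (n:ℝ)^2 * max C 1 := by ring
      _ ≤ D := le_max_left _ _
  have hlim : Tendsto (fun k : ℕ => D ^ (1 / (k:ℝ))) atTop (𝓝 1) := by
    have : Tendsto (fun k : ℕ => Real.log D * (1 / (k:ℝ))) atTop (𝓝 0) := by
      simpa using tendsto_one_div_atTop_nhds_zero_nat.const_mul (Real.log D)
    have h := (Real.continuous_exp.tendsto 0).comp this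
    simp only [Real.exp_zero] at h
    refine h.congr fun k => ?_
    rw [Function.comp_apply, Real.rpow_def_of_pos hD0]
  refine le_of_tendsto_of_tendsto' (gelfand A) hlim fun k => ?_
  exact Real.rpow_le_rpow (norm_nonneg _) (hbd k) (by positivity)

lemma diag_pow_le_specRad_pow {A : Matrix (Fin n) (Fin n) ℝ} (hA : ∀ i j, 0 ≤ A i j)
    {k : ℕ} (hk : 0 < k) (i : Fin n) : (A ^ k) i i ≤ specRad A ^ k := by
  set c := (A ^ k) i i with hc
  have hc0 : 0 ≤ c := entry_pow_nonneg hA k i i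
  have key : ∀ m : ℕ, c ^ m ≤ (A ^ (k * m)) i i := by
    intro m
    induction m with
    | zero => simp
    | succ m ih =>
      have : (A ^ (k * (m+1))) i i = ∑ l, (A ^ (k * m)) i l * (A ^ k) l i := by
        rw [mul_add, mul_one, pow_add, Matrix.mul_apply]
      rw [this]
      calc c ^ (m+1) = c ^ m * c := by ring
        _ ≤ (A ^ (k*m)) i i * (A ^ k) i i :=
            mul_le_mul ih le_rfl hc0 (entry_pow_nonneg hA _ i i)
        _ ≤ ∑ l, (A ^ (k * m)) i l * (A ^ k) l i :=
            Finset.single_le_sum (f := fun l => (A ^ (k*m)) i l * (A ^ k) l i)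
              (fun l _ => mul_nonneg (entry_pow_nonneg hA _ i l) (entry_pow_nonneg hA _ l i))
              (Finset.mem_univ i)
  have hsub : Tendsto (fun m : ℕ => ‖cm (A ^ (k * m))‖ ^ (1 / ((k * m : ℕ):ℝ))) atTop
      (𝓝 (specRad A)) := by
    refine (gelfand A).comp (tendsto_atTop_atTop.2 fun b => ⟨b, fun m hm =>
      le_trans hm (Nat.le_mul_of_pos_left m hk)⟩)
  have hge : c ^ ((1:ℝ) / k) ≤ specRad A := by
    refine ge_of_tendsto hsub ?_
    filter_upwards [eventually_ge_atTop 1] with m hm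
    have hkm : (0:ℝ) < (k * m : ℕ) := by positivity
    have h1 : c ^ m ≤ ‖cm (A ^ (k * m))‖ := by
      refine (key m).trans ?_
      have := entry_le_norm_cm (A ^ (k*m)) i i
      rwa [abs_of_nonneg (entry_pow_nonneg hA _ i i)] at this
    have h2 := Real.rpow_le_rpow (by positivity) h1 (le_of_lt (one_div_pos.2 hkm))
    refine le_trans (le_of_eq ?_) h2
    rw [← Real.rpow_natCast c m, ← Real.rpow_mul hc0]
    congr 1
    rw [Nat.cast_mul]
    field_simp
  calc c = (c ^ ((1:ℝ)/k)) ^ k := by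
        rw [← Real.rpow_natCast (c ^ ((1:ℝ)/k)) k, ← Real.rpow_mul hc0, one_div,
          inv_mul_cancel₀ (by exact_mod_cast hk.ne'), Real.rpow_one]
    _ ≤ specRad A ^ k := pow_le_pow_left₀ (Real.rpow_nonneg hc0 _) hge k

lemma one_entry_nonneg (i j : Fin n) : (0:ℝ) ≤ (1 : Matrix (Fin n) (Fin n) ℝ) i j := by
  by_cases h : i = j <;> simp [Matrix.one_apply, h]

lemma mul_entry_nonneg {A B : Matrix (Fin n) (Fin n) ℝ} (hA : ∀ i j, 0 ≤ A i j)
    (hB : ∀ i j, 0 ≤ B i j) (i j : Fin n) : 0 ≤ (A * B) i j := by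
  rw [Matrix.mul_apply]
  exact Finset.sum_nonneg fun l _ => mul_nonneg (hA i l) (hB l j)

lemma mul_entry_mono {A P Z : Matrix (Fin n) (Fin n) ℝ} (hA : ∀ i j, 0 ≤ A i j)
    (hPZ : ∀ i j, P i j ≤ Z i j) (i j : Fin n) : (A * P) i j ≤ (A * Z) i j := by
  rw [Matrix.mul_apply, Matrix.mul_apply]
  exact Finset.sum_le_sum fun l _ => mul_le_mul_of_nonneg_left (hPZ l j) (hA i l)

lemma exists_neumann {A : Matrix (Fin n) (Fin n) ℝ} (hA : ∀ i j, 0 ≤ A i j)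
    (h1 : specRad A < 1) :
    ∃ S : Matrix (Fin n) (Fin n) ℝ, (∀ i j, 0 ≤ S i j) ∧ (1 - A) * S = 1 ∧ S * (1 - A) = 1 ∧
      (∀ K i j, (∑ k ∈ Finset.range K, A ^ k) i j ≤ S i j) ∧
      (∀ i j, Tendsto (fun K => (∑ k ∈ Finset.range K, A ^ k) i j) atTop (𝓝 (S i j))) := by
  set r : ℝ := (specRad A + 1) / 2 with hr
  have hρ0 := specRad_nonneg A
  have hr0 : 0 < r := by rw [hr]; linarith
  have hr1 : r < 1 := by rw [hr]; linarith
  have hrρ : specRad A < r := by rw [hr]; linarith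
  have hev : ∀ᶠ k : ℕ in atTop, ‖cm (A ^ k)‖ ^ (1 / (k:ℝ)) < r :=
    (gelfand A).eventually_lt_const hrρ
  obtain ⟨N, hN⟩ := eventually_atTop.1 hev
  set M := max N 1 with hM
  have hbd : ∀ k, M ≤ k → ∀ i j, (A ^ k) i j ≤ r ^ k := by
    intro k hk i j
    have hk1 : 1 ≤ k := le_trans (le_max_right N 1) hk
    have hkN : N ≤ k := le_trans (le_max_left N 1) hk
    have h2 := hN k hkN
    have hx0 : (0:ℝ) ≤ ‖cm (A ^ k)‖ := norm_nonneg _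
    have h3 : ‖cm (A ^ k)‖ ≤ r ^ k := by
      have h4 : (‖cm (A ^ k)‖ ^ (1 / (k:ℝ))) ^ k ≤ r ^ k :=
        pow_le_pow_left₀ (Real.rpow_nonneg hx0 _) h2.le k
      refine le_trans (le_of_eq ?_) h4
      rw [← Real.rpow_natCast (‖cm (A ^ k)‖ ^ (1 / (k:ℝ))) k, ← Real.rpow_mul hx0,
        one_div, inv_mul_cancel₀ (by exact_mod_cast Nat.one_le_iff_ne_zero.mp hk1 : ((k:ℝ)) ≠ 0), Real.rpow_one]
    refine le_trans ?_ h3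
    have := entry_le_norm_cm (A ^ k) i j
    rwa [abs_of_nonneg (entry_pow_nonneg hA k i j)] at this
  have hsum : ∀ i j, Summable (fun k => (A ^ k) i j) := by
    intro i j
    rw [← _root_.summable_nat_add_iff M]
    refine Summable.of_nonneg_of_le (fun k => entry_pow_nonneg hA _ i j) (fun k => ?_)
      ((summable_geometric_of_lt_one hr0.le hr1).mul_left (r ^ M))
    calc (A ^ (k + M)) i j ≤ r ^ (k + M) := hbd _ le_add_self i j
      _ = r ^ M * r ^ k := by rw [pow_add]; ring
  set S : Matrix (Fin n) (Fin n) ℝ := Matrix.of (fun i j => ∑' k, (A ^ k) i j) with hS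
  have hSapp : ∀ i j, S i j = ∑' k, (A ^ k) i j := fun i j => rfl
  have htend : ∀ i j, Tendsto (fun K => (∑ k ∈ Finset.range K, A ^ k) i j) atTop (𝓝 (S i j)) := by
    intro i j
    have h := (hsum i j).hasSum.tendsto_sum_nat
    refine h.congr fun K => ?_
    rw [Matrix.sum_apply]
  have hSnn : ∀ i j, 0 ≤ S i j := fun i j =>
    tsum_nonneg fun k => entry_pow_nonneg hA k i j
  have hpart : ∀ K i j, (∑ k ∈ Finset.range K, A ^ k) i j ≤ S i j := by
    intro K i j
    rw [Matrix.sum_apply, hSapp]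
    exact Summable.sum_le_tsum (Finset.range K) (fun k _ => entry_pow_nonneg hA k i j) (hsum i j)
  have hpow0 : ∀ i j, Tendsto (fun K => (A ^ K) i j) atTop (𝓝 0) := by
    intro i j
    refine squeeze_zero' (Eventually.of_forall fun K => entry_pow_nonneg hA K i j) ?_
      (tendsto_pow_atTop_nhds_zero_of_lt_one hr0.le hr1)
    filter_upwards [eventually_ge_atTop M] with K hK
    exact hbd K hK i j
  have hmul : (1 - A) * S = 1 := by
    ext i j
    have hL : Tendsto (fun K => ((1 - A) * ∑ k ∈ Finset.range K, A ^ k) i j) atTop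
        (𝓝 (((1 - A) * S) i j)) := by
      simp only [Matrix.mul_apply]
      exact tendsto_finset_sum _ fun l _ => (tendsto_const_nhds.mul (htend l j))
    have hR : Tendsto (fun K => ((1 - A) * ∑ k ∈ Finset.range K, A ^ k) i j) atTop
        (𝓝 ((1 : Matrix (Fin n) (Fin n) ℝ) i j)) := by
      have heq : ∀ K, ((1 - A) * ∑ k ∈ Finset.range K, A ^ k) i j
          = (1 : Matrix (Fin n) (Fin n) ℝ) i j - (A ^ K) i j := by
        intro K
        have : (1 - A) * ∑ k ∈ Finset.range K, A ^ k = 1 - A ^ K := by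
          have h := mul_geom_sum (A : Matrix (Fin n) (Fin n) ℝ) K
          calc (1 - A) * ∑ k ∈ Finset.range K, A ^ k
              = -((A - 1) * ∑ k ∈ Finset.range K, A ^ k) := by rw [← neg_sub, neg_mul]
            _ = -(A ^ K - 1) := by rw [h]
            _ = 1 - A ^ K := by rw [neg_sub]
        rw [this, Matrix.sub_apply]
      refine Tendsto.congr (fun K => (heq K).symm) ?_
      have hc : Tendsto (fun _ : ℕ => (1 : Matrix (Fin n) (Fin n) ℝ) i j) atTop
          (𝓝 ((1 : Matrix (Fin n) (Fin n) ℝ) i j)) := tendsto_const_nhds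
      simpa using hc.sub (hpow0 i j)
    exact tendsto_nhds_unique hL hR
  exact ⟨S, hSnn, hmul, mul_eq_one_comm.1 hmul, hpart, htend⟩

lemma specRad_add_le_one {T B : Matrix (Fin n) (Fin n) ℝ}
    (hT : ∀ i j, 0 ≤ T i j) (hB : ∀ i j, 0 ≤ B i j) (hρT : specRad T < 1)
    (hQ : specRad (B * (1 - T)⁻¹) < 1) : specRad (T + B) ≤ 1 := by
  obtain ⟨S, hSnn, hS1, hS2, _, _⟩ := exists_neumann hT hρT
  have hSinv : (1 - T)⁻¹ = S := Matrix.inv_eq_right_inv hS1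
  rw [hSinv] at hQ
  set Q := B * S with hQdef
  have hQnn : ∀ i j, 0 ≤ Q i j := mul_entry_nonneg hB hSnn
  obtain ⟨W, hWnn, hW1, hW2, _, _⟩ := exists_neumann hQnn hQ
  set C := S * W with hCdef
  have hCnn : ∀ i j, 0 ≤ C i j := mul_entry_nonneg hSnn hWnn
  have e1 : (1 - Q) * (1 - T) = 1 - (T + B) := by
    rw [hQdef, sub_mul, one_mul, mul_assoc, hS2, mul_one]
    abel
  have hCinv : C * (1 - (T + B)) = 1 := by
    rw [← e1, hCdef]
    calc S * W * ((1 - Q) * (1 - T)) = S * (W * (1 - Q)) * (1 - T) := by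
          rw [mul_assoc, mul_assoc, mul_assoc]
      _ = 1 := by rw [hW2, mul_one, hS2]
  have hAnn : ∀ i j, 0 ≤ (T + B) i j := fun i j =>
    add_nonneg (hT i j) (hB i j)
  have hbound : ∀ k i j, ((T + B) ^ k) i j ≤ C i j := by
    intro k i j
    have hpart : (∑ m ∈ Finset.range (k+1), (T + B) ^ m) = C - C * (T + B) ^ (k+1) := by
      have hgeo : (1 - (T + B)) * ∑ m ∈ Finset.range (k+1), (T + B) ^ m
          = 1 - (T + B) ^ (k+1) := by
        have h := mul_geom_sum (T + B) (k+1)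
        calc (1 - (T + B)) * ∑ m ∈ Finset.range (k+1), (T + B) ^ m
            = -(((T + B) - 1) * ∑ m ∈ Finset.range (k+1), (T + B) ^ m) := by
              rw [← neg_sub, neg_mul]
          _ = 1 - (T + B) ^ (k+1) := by rw [h, neg_sub]
      calc (∑ m ∈ Finset.range (k+1), (T + B) ^ m)
          = (C * (1 - (T + B))) * ∑ m ∈ Finset.range (k+1), (T + B) ^ m := by
            rw [hCinv, one_mul]
        _ = C * ((1 - (T + B)) * ∑ m ∈ Finset.range (k+1), (T + B) ^ m) := by
            rw [mul_assoc]
        _ = C * (1 - (T + B) ^ (k+1)) := by rw [hgeo]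
        _ = C - C * (T + B) ^ (k+1) := by rw [mul_sub, mul_one]
    have h1 : ((T + B) ^ k) i j ≤ (∑ m ∈ Finset.range (k+1), (T + B) ^ m) i j := by
      rw [Matrix.sum_apply]
      exact Finset.single_le_sum (f := fun m => ((T + B) ^ m) i j)
        (fun m _ => entry_pow_nonneg hAnn m i j) (Finset.self_mem_range_succ k)
    refine h1.trans ?_
    rw [hpart, Matrix.sub_apply]
    have : 0 ≤ (C * (T + B) ^ (k+1)) i j :=
      mul_entry_nonneg hCnn (entry_pow_nonneg hAnn (k+1)) i j
    linarith
  exact specRad_le_one_of_bounded hAnn (∑ i, ∑ j, C i j) fun k i j =>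
    (hbound k i j).trans (by
      calc C i j ≤ ∑ j', C i j' := Finset.single_le_sum (f := fun j' => C i j')
            (fun j' _ => hCnn i j') (Finset.mem_univ j)
        _ ≤ ∑ i', ∑ j', C i' j' := Finset.single_le_sum (f := fun i' => ∑ j', C i' j')
            (fun i' _ => Finset.sum_nonneg fun j' _ => hCnn i' j') (Finset.mem_univ i))

lemma specRad_Q_le_one {T B : Matrix (Fin n) (Fin n) ℝ}
    (hT : ∀ i j, 0 ≤ T i j) (hB : ∀ i j, 0 ≤ B i j) (hρT : specRad T < 1)
    (hTB : specRad (T + B) < 1) : specRad (B * (1 - T)⁻¹) ≤ 1 := by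
  obtain ⟨S, hSnn, hS1, hS2, _, _⟩ := exists_neumann hT hρT
  have hSinv : (1 - T)⁻¹ = S := Matrix.inv_eq_right_inv hS1
  rw [hSinv]
  have hAnn : ∀ i j, 0 ≤ (T + B) i j := fun i j => add_nonneg (hT i j) (hB i j)
  obtain ⟨D, hDnn, hD1, hD2, _, _⟩ := exists_neumann hAnn hTB
  set Q := B * S with hQdef
  have hQnn : ∀ i j, 0 ≤ Q i j := mul_entry_nonneg hB hSnn
  set Z := 1 + B * D with hZdef
  have hZnn : ∀ i j, 0 ≤ Z i j := fun i j => by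
    rw [hZdef, Matrix.add_apply]
    exact add_nonneg (one_entry_nonneg i j) (mul_entry_nonneg hB hDnn i j)
  have e0 : (1 - T) * D = Z := by
    have h1 : (1 - T) * D = (1 - (T + B)) * D + B * D := by
      rw [sub_mul, sub_mul, add_mul]
      abel
    rw [hZdef, h1, hD1]
  have key : Q * Z + 1 = Z := by
    have hSZ : S * Z = D := by
      calc S * Z = S * ((1 - T) * D) := by rw [e0]
        _ = (S * (1 - T)) * D := by rw [mul_assoc]
        _ = D := by rw [hS2, one_mul]
    calc Q * Z + 1 = B * (S * Z) + 1 := by rw [hQdef, mul_assoc]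
      _ = B * D + 1 := by rw [hSZ]
      _ = Z := by rw [hZdef]; abel
  have hbound : ∀ K i j, (∑ k ∈ Finset.range K, Q ^ k) i j ≤ Z i j := by
    intro K
    induction K with
    | zero => intro i j; simpa using hZnn i j
    | succ K ih =>
      intro i j
      have hgs : (∑ k ∈ Finset.range (K+1), Q ^ k) = Q * (∑ k ∈ Finset.range K, Q ^ k) + 1 :=
        geom_sum_succ
      rw [hgs, Matrix.add_apply]
      have h1 : (Q * ∑ k ∈ Finset.range K, Q ^ k) i j ≤ (Q * Z) i j :=
        mul_entry_mono hQnn (fun i' j' => ih i' j') i j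
      have h2 : (Q * Z) i j + (1 : Matrix (Fin n) (Fin n) ℝ) i j = Z i j := by
        have := congrArg (fun M => M i j) key
        simpa [Matrix.add_apply] using this
      linarith
  refine specRad_le_one_of_bounded hQnn (∑ i, ∑ j, Z i j) fun k i j => ?_
  have h1 : (Q ^ k) i j ≤ (∑ m ∈ Finset.range (k+1), Q ^ m) i j := by
    rw [Matrix.sum_apply]
    exact Finset.single_le_sum (f := fun m => (Q ^ m) i j)
      (fun m _ => entry_pow_nonneg hQnn m i j) (Finset.self_mem_range_succ k)
  refine h1.trans ((hbound (k+1) i j).trans ?_)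
  calc Z i j ≤ ∑ j', Z i j' := Finset.single_le_sum (f := fun j' => Z i j')
        (fun j' _ => hZnn i j') (Finset.mem_univ j)
    _ ≤ ∑ i', ∑ j', Z i' j' := Finset.single_le_sum (f := fun i' => ∑ j', Z i' j')
        (fun i' _ => Finset.sum_nonneg fun j' _ => hZnn i' j') (Finset.mem_univ i)

lemma inv_one_sub_smul_le {T : Matrix (Fin n) (Fin n) ℝ} (hT : ∀ i j, 0 ≤ T i j)
    (hρT : specRad T < 1) {t : ℝ} (ht0 : 0 ≤ t) (ht1 : t ≤ 1) :
    specRad (t • T) < 1 ∧ (∀ i j, 0 ≤ (1 - t • T)⁻¹ i j) ∧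
      ∀ i j, (1 - t • T)⁻¹ i j ≤ (1 - T)⁻¹ i j := by
  have htTnn : ∀ i j, 0 ≤ (t • T) i j := fun i j => by
    rw [Matrix.smul_apply, smul_eq_mul]; exact mul_nonneg ht0 (hT i j)
  have htTle : ∀ i j, (t • T) i j ≤ T i j := fun i j => by
    rw [Matrix.smul_apply, smul_eq_mul]
    nlinarith [hT i j]
  have hρ' : specRad (t • T) < 1 := lt_of_le_of_lt (specRad_mono htTnn htTle) hρT
  obtain ⟨S, hSnn, hS1, hS2, hSpart, hStend⟩ := exists_neumann hT hρT
  obtain ⟨S', hS'nn, hS'1, hS'2, hS'part, hS'tend⟩ := exists_neumann htTnn hρ'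
  have hSinv : (1 - T)⁻¹ = S := Matrix.inv_eq_right_inv hS1
  have hS'inv : (1 - t • T)⁻¹ = S' := Matrix.inv_eq_right_inv hS'1
  rw [hSinv, hS'inv]
  refine ⟨hρ', hS'nn, fun i j => ?_⟩
  refine le_of_tendsto_of_tendsto' (hS'tend i j) (hStend i j) fun K => ?_
  rw [Matrix.sum_apply, Matrix.sum_apply]
  refine Finset.sum_le_sum fun k _ => ?_
  exact entry_pow_mono htTnn htTle k i j

lemma exists_big_s {T F : Matrix (Fin n) (Fin n) ℝ}
    (hT : ∀ i j, 0 ≤ T i j) (hF : ∀ i j, 0 ≤ F i j)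
    (hF0 : F ≠ 0) (hirr : MatIrred (T + F)) :
    ∃ s : ℝ, 0 < s ∧ 1 < specRad (T + s • F) := by
  have hex : ∃ i j, 0 < F i j := by
    by_contra h
    push_neg at h
    exact hF0 (Matrix.ext fun i j => le_antisymm (h i j) (hF i j))
  obtain ⟨i, j, hij⟩ := hex
  obtain ⟨k, hk0, hkc⟩ := hirr j i
  set c := ((T + F) ^ k) j i with hc
  have hTFnn : ∀ a b, 0 ≤ (T + F) a b := fun a b => add_nonneg (hT a b) (hF a b)
  set s : ℝ := max 1 (2 ^ (k+1) / (F i j * c)) with hs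
  have hs1 : 1 ≤ s := le_max_left _ _
  have hs0 : 0 < s := lt_of_lt_of_le one_pos hs1
  refine ⟨s, hs0, ?_⟩
  set A := T + s • F with hA
  have hAnn : ∀ a b, 0 ≤ A a b := fun a b => by
    rw [hA, Matrix.add_apply, Matrix.smul_apply, smul_eq_mul]
    exact add_nonneg (hT a b) (mul_nonneg hs0.le (hF a b))
  have hge : ∀ a b, (T + F) a b ≤ A a b := fun a b => by
    rw [hA, Matrix.add_apply, Matrix.add_apply, Matrix.smul_apply, smul_eq_mul]
    nlinarith [hF a b]
  have h1 : s * F i j * c ≤ (A ^ (k+1)) i i := by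
    have hAk : c ≤ (A ^ k) j i := by
      rw [hc]; exact entry_pow_mono hTFnn hge k j i
    have hAij : s * F i j ≤ A i j := by
      rw [hA, Matrix.add_apply, Matrix.smul_apply, smul_eq_mul]
      linarith [hT i j]
    have hsum : A i j * (A ^ k) j i ≤ (A ^ (k+1)) i i := by
      have : (A ^ (k+1)) i i = ∑ l, A i l * (A ^ k) l i := by
        rw [pow_succ', Matrix.mul_apply]
      rw [this]
      exact Finset.single_le_sum (f := fun l => A i l * (A ^ k) l i)
        (fun l _ => mul_nonneg (hAnn i l) (entry_pow_nonneg hAnn k l i)) (Finset.mem_univ j)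
    refine le_trans ?_ hsum
    have hc0 : 0 ≤ c := entry_pow_nonneg hTFnn k j i
    have := mul_le_mul hAij hAk hc0 (hAnn i j)
    linarith
  have hc0 : 0 < c := hkc
  have h2 : (2:ℝ) ^ (k+1) ≤ s * (F i j * c) := by
    have : 2 ^ (k+1) / (F i j * c) ≤ s := le_max_right _ _
    rw [div_le_iff₀ (by positivity)] at this
    nlinarith
  have h3 : (2:ℝ) ^ (k+1) ≤ specRad A ^ (k+1) := by
    refine le_trans h2 (le_trans (by nlinarith) ((h1.trans (diag_pow_le_specRad_pow hAnn
      (Nat.succ_pos k) i))))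
  by_contra hle
  push_neg at hle
  have : specRad A ^ (k+1) ≤ 1 := pow_le_one₀ (specRad_nonneg A) hle
  have : (2:ℝ) ^ (k+1) ≤ 1 := h3.trans this
  have : (1:ℝ) < 2 ^ (k+1) := one_lt_pow₀ (by norm_num) (Nat.succ_ne_zero k)
  linarith

theorem net_reproductive_rate_pos_and_scaled_specRad_one {n : ℕ}
    (T F : Matrix (Fin n) (Fin n) ℝ)
    (hT : ∀ i j, 0 ≤ T i j) (hF : ∀ i j, 0 ≤ F i j)
    (hρ : specRad T < 1) (hF0 : F ≠ 0) (hirr : MatIrred (T + F)) :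
    0 < specRad (F * (1 - T)⁻¹) ∧
    specRad (T + (specRad (F * (1 - T)⁻¹))⁻¹ • F) = 1 := by
  set r := specRad (F * (1 - T)⁻¹) with hr
  obtain ⟨s, hs0, hs1⟩ := exists_big_s hT hF hF0 hirr
  have hsFnn : ∀ i j, 0 ≤ (s • F) i j := fun i j => by
    rw [Matrix.smul_apply, smul_eq_mul]; exact mul_nonneg hs0.le (hF i j)
  have hrpos : 0 < r := by
    rcases (specRad_nonneg (F * (1 - T)⁻¹)).lt_or_eq with h | h
    · exact h
    · exfalso
      have hQs : specRad ((s • F) * (1 - T)⁻¹) = s * r := by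
        rw [Matrix.smul_mul, specRad_smul _ hs0.le, hr]
      have hr0 : r = 0 := by rw [hr, ← h]
      have hle := specRad_add_le_one hT hsFnn hρ
        (by rw [hQs, hr0, mul_zero]; norm_num)
      linarith
  set B := r⁻¹ • F with hB
  have hrinv : 0 < r⁻¹ := inv_pos.2 hrpos
  have hBnn : ∀ i j, 0 ≤ B i j := fun i j => by
    rw [hB, Matrix.smul_apply, smul_eq_mul]; exact mul_nonneg hrinv.le (hF i j)
  have hQB : specRad (B * (1 - T)⁻¹) = 1 := by
    rw [hB, Matrix.smul_mul, specRad_smul _ hrinv.le, ← hr, inv_mul_cancel₀ hrpos.ne']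
  refine ⟨hrpos, ?_⟩
  rcases lt_trichotomy (specRad (T + B)) 1 with hlt | heq | hgt
  · exfalso
    set ρ₀ := specRad (T + B) with hρ₀
    have hρ₀0 : 0 ≤ ρ₀ := specRad_nonneg _
    set u : ℝ := 2 / (1 + ρ₀) with hu
    have hden : 0 < 1 + ρ₀ := by linarith
    have hu1 : 1 < u := by rw [hu, lt_div_iff₀ hden]; linarith
    have huρ : u * ρ₀ < 1 := by rw [hu, div_mul_eq_mul_div, div_lt_one hden]; linarith
    have huBnn : ∀ i j, 0 ≤ (u • B) i j := fun i j => by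
      rw [Matrix.smul_apply, smul_eq_mul]; exact mul_nonneg (by linarith) (hBnn i j)
    have hTuB : ∀ i j, 0 ≤ (T + u • B) i j := fun i j =>
      add_nonneg (hT i j) (huBnn i j)
    have hmono : specRad (T + u • B) ≤ specRad (u • (T + B)) := by
      refine specRad_mono hTuB fun i j => ?_
      simp only [Matrix.add_apply, Matrix.smul_apply, smul_eq_mul]
      nlinarith [hT i j]
    have hlt2 : specRad (T + u • B) < 1 := by
      rw [specRad_smul _ (by linarith : (0:ℝ) ≤ u)] at hmono
      exact lt_of_le_of_lt hmono huρ
    have hle := specRad_Q_le_one hT huBnn hρ hlt2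
    rw [Matrix.smul_mul, specRad_smul _ (by linarith : (0:ℝ) ≤ u), hQB, mul_one] at hle
    linarith
  · exact heq
  · exfalso
    set ρ₁ := specRad (T + B) with hρ₁
    have hρ₁0 : 0 < ρ₁ := lt_trans one_pos hgt
    set t : ℝ := (1 + ρ₁⁻¹) / 2 with ht
    have htinv : ρ₁⁻¹ < 1 := by rw [inv_lt_one_iff₀]; right; exact hgt
    have htinv0 : 0 < ρ₁⁻¹ := inv_pos.2 hρ₁0
    have ht0 : 0 < t := by rw [ht]; linarith
    have ht1 : t < 1 := by rw [ht]; linarith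
    have htρ : 1 < t * ρ₁ := by
      rw [ht]
      have : (1 + ρ₁⁻¹) / 2 * ρ₁ = (ρ₁ + ρ₁⁻¹ * ρ₁) / 2 := by ring
      rw [this, inv_mul_cancel₀ hρ₁0.ne']
      linarith
    obtain ⟨hρtT, hStnn, hStle⟩ := inv_one_sub_smul_le hT hρ ht0.le ht1.le
    have htTnn : ∀ i j, 0 ≤ (t • T) i j := fun i j => by
      rw [Matrix.smul_apply, smul_eq_mul]; exact mul_nonneg ht0.le (hT i j)
    have htBnn : ∀ i j, 0 ≤ (t • B) i j := fun i j => by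
      rw [Matrix.smul_apply, smul_eq_mul]; exact mul_nonneg ht0.le (hBnn i j)
    have hsum : t • T + t • B = t • (T + B) := (smul_add t T B).symm
    have hgt2 : 1 < specRad (t • T + t • B) := by
      rw [hsum, specRad_smul _ ht0.le]
      exact htρ
    have hge : ¬ specRad ((t • B) * (1 - t • T)⁻¹) < 1 := by
      intro hcon
      have := specRad_add_le_one htTnn htBnn hρtT hcon
      linarith
    push_neg at hge
    have hQnn : ∀ i j, 0 ≤ ((t • B) * (1 - t • T)⁻¹) i j :=
      mul_entry_nonneg htBnn hStnn
    have hQle : ∀ i j, ((t • B) * (1 - t • T)⁻¹) i j ≤ ((t • B) * (1 - T)⁻¹) i j :=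
      mul_entry_mono htBnn hStle
    have hmono2 : specRad ((t • B) * (1 - t • T)⁻¹) ≤ specRad ((t • B) * (1 - T)⁻¹) :=
      specRad_mono hQnn hQle
    have heq2 : specRad ((t • B) * (1 - T)⁻¹) = t := by
      rw [Matrix.smul_mul, specRad_smul _ ht0.le, hQB, mul_one]
    rw [heq2] at hmono2
    linarith
end

section
/- Let T and F be nonnegative n×n matrices with ρ(T) < 1. Set r = ρ(T+F), Q = F(I−T)^{-1}, and R₀ = ρ(Q). Then one of the following holds: r = R₀ = 1, or 1 < r ≤ R₀, or 0 ≤ R₀ ≤ r < 1. -/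
open Matrix Filter Topology

open Set
open scoped NNReal ENNReal

namespace CY
attribute [local instance] Matrix.linftyOpNormedRing Matrix.linftyOpNormedAlgebra

variable {n : ℕ}

noncomputable instance : CompleteSpace (Matrix (Fin n) (Fin n) ℂ) :=
  by infer_instance

noncomputable def sR (A : Matrix (Fin n) (Fin n) ℝ) : ℝ :=
  (spectralRadius ℂ (A.map Complex.ofReal)).toReal

lemma cmap_pow (A : Matrix (Fin n) (Fin n) ℝ) (k : ℕ) :
    (A.map Complex.ofReal) ^ k = (A ^ k).map Complex.ofReal := by
  exact (map_pow (Complex.ofRealHom.mapMatrix) A k).symm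

lemma cmap_nnnorm (A : Matrix (Fin n) (Fin n) ℝ) : ‖A.map Complex.ofReal‖₊ = ‖A‖₊ := by
  rw [Matrix.linfty_opNNNorm_def, Matrix.linfty_opNNNorm_def]
  congr 1; ext i; congr 1; ext j
  simp [Matrix.map_apply]

lemma entry_le_nnnorm (A : Matrix (Fin n) (Fin n) ℝ) (i j : Fin n) : A i j ≤ ‖A‖ := by
  calc A i j ≤ |A i j| := le_abs_self _
  _ = ‖A i j‖ := rfl
  _ ≤ ∑ l, ‖A i l‖ := Finset.single_le_sum (fun l _ => norm_nonneg _) (Finset.mem_univ j)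
  _ ≤ ‖A‖ := by
      rw [Matrix.linfty_opNorm_def]
      have h := Finset.le_sup (f := fun i => ∑ j, ‖A i j‖₊) (Finset.mem_univ i)
      have : (∑ l, ‖A i l‖₊ : ℝ≥0) ≤ (Finset.univ.sup fun i => ∑ j, ‖A i j‖₊) := h
      calc (∑ l, ‖A i l‖) = ((∑ l, ‖A i l‖₊ : ℝ≥0) : ℝ) := by push_cast; rfl
      _ ≤ _ := by exact_mod_cast this

lemma nnnorm_le_sum (A : Matrix (Fin n) (Fin n) ℝ) (hA : ∀ i j, 0 ≤ A i j) :
    ‖A‖ ≤ ∑ i, ∑ j, A i j := by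
  rw [Matrix.linfty_opNorm_def]
  have h : (Finset.univ.sup fun i => ∑ j, ‖A i j‖₊ : ℝ≥0) ≤ ∑ i, ∑ j, ‖A i j‖₊ := by
    apply Finset.sup_le
    intro i _
    exact Finset.single_le_sum (f := fun i => ∑ j, ‖A i j‖₊) (fun _ _ => zero_le) (Finset.mem_univ i)
  calc ((Finset.univ.sup fun i => ∑ j, ‖A i j‖₊ : ℝ≥0) : ℝ) ≤ ((∑ i, ∑ j, ‖A i j‖₊ : ℝ≥0) : ℝ) := by exact_mod_cast h
  _ = ∑ i, ∑ j, A i j := by push_cast; exact Finset.sum_congr rfl fun i _ => Finset.sum_congr rfl fun j _ => abs_of_nonneg (hA i j)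

section SR
variable [Nonempty (Fin n)]

lemma specRadius_ne_top (A : Matrix (Fin n) (Fin n) ℝ) :
    spectralRadius ℂ (A.map Complex.ofReal) ≠ ⊤ :=
  ((spectrum.spectralRadius_le_nnnorm (𝕜 := ℂ) (A.map Complex.ofReal)).trans_lt ENNReal.coe_lt_top).ne

lemma sR_lt_iff (A : Matrix (Fin n) (Fin n) ℝ) {s : ℝ} (hs : 0 < s) :
    sR A < s ↔ ∃ k, 0 < k ∧ ‖A ^ k‖ < s ^ k := by
  set a := A.map Complex.ofReal with ha
  have hne := specRadius_ne_top A
  have hnorm : ∀ k : ℕ, ‖a ^ k‖₊ = ‖A ^ k‖₊ := fun k => by rw [ha, cmap_pow, cmap_nnnorm]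
  rw [sR, ← ENNReal.lt_ofReal_iff_toReal_lt hne]
  have hofk : ∀ k : ℕ, ENNReal.ofReal (s ^ k) = (ENNReal.ofReal s) ^ k := fun k =>
    ENNReal.ofReal_pow hs.le k
  constructor
  · intro h
    have hev := (spectrum.pow_nnnorm_pow_one_div_tendsto_nhds_spectralRadius a).eventually_lt_const h
    obtain ⟨k, hk1, hk⟩ := (hev.and (Filter.eventually_ge_atTop 1)).exists
    refine ⟨k, hk, ?_⟩
    have hk0 : (k : ℝ) ≠ 0 := by positivity
    have h2 : (‖a ^ k‖₊ : ℝ≥0∞) < (ENNReal.ofReal s) ^ (k : ℝ) := by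
      have h3 := ENNReal.rpow_lt_rpow hk1 (by positivity : (0:ℝ) < k)
      rwa [← ENNReal.rpow_mul, one_div, inv_mul_cancel₀ hk0, ENNReal.rpow_one] at h3
    rw [ENNReal.rpow_natCast, ← hofk, hnorm] at h2
    have h4 := ENNReal.toReal_lt_of_lt_ofReal h2
    simpa using h4
  · rintro ⟨k, hkpos, hk⟩
    obtain ⟨m, rfl⟩ : ∃ m, k = m + 1 := ⟨k - 1, by omega⟩
    have h1 : spectralRadius ℂ a ≤ (‖a ^ (m+1)‖₊ : ℝ≥0∞) ^ (1 / (m+1:ℝ)) := by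
      have h0 := spectrum.spectralRadius_le_pow_nnnorm_pow_one_div ℂ a m
      rwa [nnnorm_one, ENNReal.coe_one, ENNReal.one_rpow, mul_one] at h0
    have h2 : (‖a ^ (m+1)‖₊ : ℝ≥0∞) < (ENNReal.ofReal s) ^ ((m+1:ℕ) : ℝ) := by
      rw [ENNReal.rpow_natCast, ← hofk, hnorm]
      have : ‖A ^ (m+1)‖₊ < (s ^ (m+1)).toNNReal := by
        rw [← norm_toNNReal]
        exact (Real.toNNReal_lt_toNNReal_iff (by positivity)).2 hk
      calc (‖A ^ (m+1)‖₊ : ℝ≥0∞) < ((s ^ (m+1)).toNNReal : ℝ≥0∞) := by exact_mod_cast this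
      _ = ENNReal.ofReal (s ^ (m+1)) := rfl
    have hm0 : ((m+1:ℕ) : ℝ) ≠ 0 := by positivity
    calc spectralRadius ℂ a ≤ (‖a ^ (m+1)‖₊ : ℝ≥0∞) ^ (1 / (m+1:ℝ)) := h1
    _ < ((ENNReal.ofReal s) ^ ((m+1:ℕ):ℝ)) ^ (1 / (m+1:ℝ)) := by
        apply ENNReal.rpow_lt_rpow h2 (by positivity)
    _ = ENNReal.ofReal s := by
        rw [← ENNReal.rpow_mul, one_div]
        rw [show ((m+1:ℕ):ℝ) * ((m+1:ℝ))⁻¹ = 1 by push_cast; field_simp]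
        exact ENNReal.rpow_one _

end SR

section Order
variable {n : ℕ}

def Nn (A : Matrix (Fin n) (Fin n) ℝ) : Prop := ∀ i j, 0 ≤ A i j
def Ele (A B : Matrix (Fin n) (Fin n) ℝ) : Prop := ∀ i j, A i j ≤ B i j

lemma Nn.add {A B : Matrix (Fin n) (Fin n) ℝ} (hA : Nn A) (hB : Nn B) : Nn (A + B) :=
  fun i j => by simpa [Matrix.add_apply] using add_nonneg (hA i j) (hB i j)

lemma Nn.mul {A B : Matrix (Fin n) (Fin n) ℝ} (hA : Nn A) (hB : Nn B) : Nn (A * B) := by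
  intro i j
  rw [Matrix.mul_apply]
  exact Finset.sum_nonneg fun l _ => mul_nonneg (hA i l) (hB l j)

lemma Nn.pow {A : Matrix (Fin n) (Fin n) ℝ} (hA : Nn A) (k : ℕ) : Nn (A ^ k) := by
  induction k with
  | zero => intro i j; simp [Matrix.one_apply]; positivity
  | succ m ih => rw [pow_succ]; exact ih.mul hA

lemma Nn.one : Nn (1 : Matrix (Fin n) (Fin n) ℝ) := by
  intro i j; simp [Matrix.one_apply]; positivity

lemma Ele.mul {A B C D : Matrix (Fin n) (Fin n) ℝ} (hA : Nn A) (hD : Nn D)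
    (h1 : Ele A C) (h2 : Ele B D) : Ele (A * B) (C * D) := by
  intro i j
  rw [Matrix.mul_apply, Matrix.mul_apply]
  refine Finset.sum_le_sum fun l _ => ?_
  calc A i l * B l j ≤ A i l * D l j := mul_le_mul_of_nonneg_left (h2 l j) (hA i l)
  _ ≤ C i l * D l j := mul_le_mul_of_nonneg_right (h1 i l) (hD l j)

lemma Ele.pow {A B : Matrix (Fin n) (Fin n) ℝ} (hA : Nn A) (h : Ele A B) (k : ℕ) :
    Ele (A ^ k) (B ^ k) := by
  have hB : Nn B := fun i j => le_trans (hA i j) (h i j)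
  induction k with
  | zero => intro i j; simp
  | succ m ih => rw [pow_succ, pow_succ]; exact Ele.mul (hA.pow m) hB ih h

lemma norm_mono {A B : Matrix (Fin n) (Fin n) ℝ} (hA : Nn A) (h : Ele A B) : ‖A‖ ≤ ‖B‖ := by
  rw [Matrix.linfty_opNorm_def, Matrix.linfty_opNorm_def]
  have : ∀ i, (∑ j, ‖A i j‖₊) ≤ ∑ j, ‖B i j‖₊ := by
    intro i
    refine Finset.sum_le_sum fun j _ => ?_
    have h0 := hA i j
    have h1 := h i j
    rw [← NNReal.coe_le_coe]
    simpa [coe_nnnorm, Real.norm_eq_abs, abs_of_nonneg h0, abs_of_nonneg (h0.trans h1)] using h1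
  exact_mod_cast Finset.sup_mono_fun fun i _ => this i

lemma sR_nonneg (A : Matrix (Fin n) (Fin n) ℝ) : 0 ≤ sR A := ENNReal.toReal_nonneg

lemma sR_mono [Nonempty (Fin n)] {A B : Matrix (Fin n) (Fin n) ℝ} (hA : Nn A) (h : Ele A B) :
    sR A ≤ sR B := by
  by_contra hc
  push_neg at hc
  set s := (sR A + sR B) / 2 with hs
  have hBs : sR B < s := by simp only [hs]; linarith
  have hs0 : 0 < s := lt_of_le_of_lt (sR_nonneg B) hBs
  obtain ⟨k, hk0, hk⟩ := (sR_lt_iff B hs0).1 hBs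
  have : sR A < s := (sR_lt_iff A hs0).2 ⟨k, hk0,
    lt_of_le_of_lt (norm_mono (hA.pow k) (Ele.pow hA h k)) hk⟩
  simp only [hs] at this
  linarith

lemma sR_smul_lt_iff [Nonempty (Fin n)] (A : Matrix (Fin n) (Fin n) ℝ) {c s : ℝ}
    (hc : 0 < c) (hs : 0 < s) : sR (c • A) < c * s ↔ sR A < s := by
  rw [sR_lt_iff _ (by positivity), sR_lt_iff _ hs]
  constructor <;> rintro ⟨k, hk0, hk⟩ <;> refine ⟨k, hk0, ?_⟩
  · have he : (c • A) ^ k = c ^ k • A ^ k := smul_pow c A k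
    rw [he, norm_smul, mul_pow, Real.norm_eq_abs, abs_of_nonneg (by positivity : (0:ℝ) ≤ c ^ k)] at hk
    exact lt_of_mul_lt_mul_left hk (by positivity)
  · have he : (c • A) ^ k = c ^ k • A ^ k := smul_pow c A k
    rw [he, norm_smul, mul_pow, Real.norm_eq_abs, abs_of_nonneg (by positivity : (0:ℝ) ≤ c ^ k)]
    exact mul_lt_mul_of_pos_left hk (by positivity)

end Order

section BD
variable {n : ℕ} [Nonempty (Fin n)]

lemma norm_pow_le_aux {A : Matrix (Fin n) (Fin n) ℝ} {k : ℕ} (hk : 0 < k) (m : ℕ) :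
    ‖A ^ m‖ ≤ ‖A ^ (m % k)‖ * ‖A ^ k‖ ^ (m / k) := by
  conv_lhs => rw [show m = m % k + k * (m / k) from (Nat.mod_add_div m k).symm]
  rw [pow_add, pow_mul]
  calc ‖A ^ (m % k) * (A ^ k) ^ (m / k)‖ ≤ ‖A ^ (m % k)‖ * ‖(A ^ k) ^ (m / k)‖ := norm_mul_le _ _
  _ ≤ ‖A ^ (m % k)‖ * ‖A ^ k‖ ^ (m / k) :=
      mul_le_mul_of_nonneg_left (norm_pow_le _ _) (norm_nonneg _)

lemma bd_of_sR_lt_one {A : Matrix (Fin n) (Fin n) ℝ} (hA : Nn A) (h : sR A < 1) :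
    ∃ C : ℝ, ∀ N i j, ∑ m ∈ Finset.range N, (A ^ m) i j ≤ C := by
  obtain ⟨k, hk0, hk⟩ := (sR_lt_iff A one_pos).1 h
  rw [one_pow] at hk
  set c : ℝ := max ‖A ^ k‖ 2⁻¹ with hc
  have hc0 : 0 < c := lt_of_lt_of_le (by norm_num) (le_max_right _ _)
  have hc1 : c < 1 := max_lt hk (by norm_num)
  have hAc : ‖A ^ k‖ ≤ c := le_max_left _ _
  set θ : ℝ := c ^ ((k : ℝ)⁻¹) with hθ
  have hθ0 : 0 < θ := Real.rpow_pos_of_pos hc0 _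
  have hθ1 : θ < 1 := Real.rpow_lt_one hc0.le hc1 (by positivity)
  set B : ℝ := ∑ r ∈ Finset.range k, ‖A ^ r‖ with hB
  have hBnn : 0 ≤ B := Finset.sum_nonneg fun r _ => norm_nonneg _
  have key : ∀ m : ℕ, ‖A ^ m‖ ≤ B * c⁻¹ * θ ^ m := by
    intro m
    have h1 : ‖A ^ m‖ ≤ ‖A ^ (m % k)‖ * c ^ (m / k) :=
      (norm_pow_le_aux hk0 m).trans (mul_le_mul_of_nonneg_left
        (pow_le_pow_left₀ (norm_nonneg _) hAc _) (norm_nonneg _))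
    have h2 : ‖A ^ (m % k)‖ ≤ B :=
      Finset.single_le_sum (f := fun r => ‖A ^ r‖) (fun r _ => norm_nonneg _)
        (Finset.mem_range.2 (Nat.mod_lt m hk0))
    have h3 : c ^ (m / k) ≤ c⁻¹ * θ ^ m := by
      have e1 : θ ^ m = c ^ ((m : ℝ) * (k:ℝ)⁻¹) := by
        rw [hθ, ← Real.rpow_natCast (c ^ ((k:ℝ)⁻¹)) m, ← Real.rpow_mul hc0.le, mul_comm]
      have e2 : (c : ℝ) ^ (m / k) = c ^ ((m / k : ℕ) : ℝ) := (Real.rpow_natCast c (m/k)).symm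
      rw [e1, e2, ← Real.rpow_neg_one c, ← Real.rpow_add hc0]
      apply Real.rpow_le_rpow_of_exponent_ge hc0 hc1.le
      have h4 : (m : ℝ) < (k : ℝ) * ((m / k : ℕ) + 1) := by
        exact_mod_cast Nat.lt_mul_div_succ m hk0
      have hkpos : (0:ℝ) < (k:ℝ) := by exact_mod_cast hk0
      have h5 : (m:ℝ) / k < (↑(m / k) + 1) := (div_lt_iff₀ hkpos).2 (by linarith [h4])
      rw [← div_eq_mul_inv]
      linarith
    calc ‖A ^ m‖ ≤ ‖A ^ (m % k)‖ * c ^ (m / k) := h1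
    _ ≤ B * (c⁻¹ * θ ^ m) := by
        apply mul_le_mul h2 h3 (by positivity) hBnn
    _ = B * c⁻¹ * θ ^ m := by ring
  refine ⟨B * c⁻¹ * ∑' m : ℕ, θ ^ m, fun N i j => ?_⟩
  calc ∑ m ∈ Finset.range N, (A ^ m) i j ≤ ∑ m ∈ Finset.range N, B * c⁻¹ * θ ^ m :=
      Finset.sum_le_sum fun m _ => le_trans (entry_le_nnnorm _ i j) (key m)
  _ = B * c⁻¹ * ∑ m ∈ Finset.range N, θ ^ m := by rw [Finset.mul_sum]
  _ ≤ B * c⁻¹ * ∑' m : ℕ, θ ^ m := by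
      apply mul_le_mul_of_nonneg_left _ (by positivity)
      exact Summable.sum_le_tsum (Finset.range N) (fun m _ => by positivity)
        (summable_geometric_of_lt_one hθ0.le hθ1)

lemma sR_lt_one_of_bd {A : Matrix (Fin n) (Fin n) ℝ} (hA : Nn A)
    (h : ∃ C : ℝ, ∀ N i j, ∑ m ∈ Finset.range N, (A ^ m) i j ≤ C) : sR A < 1 := by
  obtain ⟨C, hC⟩ := h
  have hsummable : ∀ i j, Summable fun m => (A ^ m) i j := fun i j =>
    summable_of_sum_range_le (fun m => hA.pow m i j) (fun N => hC N i j)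
  have htend : Tendsto (fun m => ∑ i, ∑ j, (A ^ m) i j) atTop (𝓝 0) := by
    have : Tendsto (fun m => ∑ i, ∑ j, (A ^ m) i j) atTop (𝓝 (∑ i : Fin n, ∑ j : Fin n, 0)) :=
      tendsto_finset_sum _ fun i _ => tendsto_finset_sum _ fun j _ =>
        (hsummable i j).tendsto_atTop_zero
    simpa using this
  have hev : ∀ᶠ m in atTop, ‖A ^ m‖ < 1 := by
    have h2 := htend.eventually_lt_const (by norm_num : (0:ℝ) < 1)
    filter_upwards [h2] with m hm
    exact lt_of_le_of_lt (nnnorm_le_sum _ (hA.pow m)) hm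
  obtain ⟨m, hm, hm1⟩ := (hev.and (Filter.eventually_ge_atTop 1)).exists
  exact (sR_lt_iff A one_pos).2 ⟨m, hm1, by simpa using hm⟩

end BD

section INV
variable {n : ℕ} [Nonempty (Fin n)]

set_option maxHeartbeats 2000000 in
lemma inv_facts {A : Matrix (Fin n) (Fin n) ℝ} (hA : Nn A) (h : sR A < 1) :
    (∀ i j, HasSum (fun m => (A ^ m) i j) ((1 - A)⁻¹ i j)) ∧
    (1 - A) * (1 - A)⁻¹ = 1 ∧ (1 - A)⁻¹ * (1 - A) = 1 := by
  obtain ⟨C, hC⟩ := bd_of_sR_lt_one hA h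
  have hsum : ∀ i j, Summable fun m => (A ^ m) i j := fun i j =>
    summable_of_sum_range_le (fun m => hA.pow m i j) (fun N => hC N i j)
  have htele : ∀ i j, HasSum (fun m => (A ^ m) i j - (A ^ (m+1)) i j) ((1 : Matrix (Fin n) (Fin n) ℝ) i j) := by
    intro i j
    have hs2 : Summable fun m => (A ^ (m+1)) i j := (summable_nat_add_iff 1).2 (hsum i j)
    have hs3 : Summable fun m => (A ^ m) i j - (A ^ (m+1)) i j := (hsum i j).sub hs2
    rw [hs3.hasSum_iff_tendsto_nat]
    have hid : ∀ N, ∑ m ∈ Finset.range N, ((A ^ m) i j - (A ^ (m+1)) i j)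
        = (A ^ 0) i j - (A ^ N) i j := fun N => Finset.sum_range_sub' (fun m => (A ^ m) i j) N
    simp only [hid, pow_zero]
    have : Tendsto (fun N => (1 : Matrix (Fin n) (Fin n) ℝ) i j - (A ^ N) i j) atTop
        (𝓝 ((1 : Matrix (Fin n) (Fin n) ℝ) i j - 0)) :=
      tendsto_const_nhds.sub (hsum i j).tendsto_atTop_zero
    simpa using this
  set P : Matrix (Fin n) (Fin n) ℝ := Matrix.of (fun i j => ∑' m, (A ^ m) i j) with hPdef
  have hPe : ∀ i j, P i j = ∑' m, (A ^ m) i j := fun i j => rfl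
  have hPA : P * (1 - A) = 1 := by
    ext i j
    rw [Matrix.mul_apply]
    have h2 : ∀ m : ℕ, ∑ l, (A ^ m) i l * (1 - A) l j = (A ^ m) i j - (A ^ (m+1)) i j := by
      intro m
      rw [← Matrix.mul_apply, mul_sub, mul_one, ← pow_succ, Matrix.sub_apply]
    calc ∑ l, P i l * (1 - A) l j = ∑ l, ∑' m, ((A ^ m) i l * (1 - A) l j) := by
          refine Finset.sum_congr rfl fun l _ => ?_
          rw [hPe]
          exact (tsum_mul_right).symm
    _ = ∑' m, ∑ l, ((A ^ m) i l * (1 - A) l j) :=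
          (Summable.tsum_finsetSum fun l _ => (hsum i l).mul_right _).symm
    _ = ∑' m, ((A ^ m) i j - (A ^ (m+1)) i j) := by
          exact tsum_congr fun m => h2 m
    _ = (1 : Matrix (Fin n) (Fin n) ℝ) i j := (htele i j).tsum_eq
  have hAP : (1 - A) * P = 1 := by
    ext i j
    rw [Matrix.mul_apply]
    have h2 : ∀ m : ℕ, ∑ l, (1 - A) i l * (A ^ m) l j = (A ^ m) i j - (A ^ (m+1)) i j := by
      intro m
      rw [← Matrix.mul_apply, sub_mul, one_mul, ← pow_succ', Matrix.sub_apply]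
    calc ∑ l, (1 - A) i l * P l j = ∑ l, ∑' m, ((1 - A) i l * (A ^ m) l j) := by
          refine Finset.sum_congr rfl fun l _ => ?_
          rw [hPe]
          exact (tsum_mul_left).symm
    _ = ∑' m, ∑ l, ((1 - A) i l * (A ^ m) l j) :=
          (Summable.tsum_finsetSum fun l _ => (hsum l j).mul_left _).symm
    _ = ∑' m, ((A ^ m) i j - (A ^ (m+1)) i j) := by
          exact tsum_congr fun m => h2 m
    _ = (1 : Matrix (Fin n) (Fin n) ℝ) i j := (htele i j).tsum_eq
  have hinv : (1 - A)⁻¹ = P := Matrix.inv_eq_right_inv hAP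
  refine ⟨fun i j => ?_, by rw [hinv]; exact hAP, by rw [hinv]; exact hPA⟩
  rw [hinv, hPe]
  exact (hsum i j).hasSum

lemma inv_nn {A : Matrix (Fin n) (Fin n) ℝ} (hA : Nn A) (h : sR A < 1) : Nn (1 - A)⁻¹ :=
  fun i j => hasSum_le (fun m => hA.pow m i j) hasSum_zero ((inv_facts hA h).1 i j)

lemma one_le_inv {A : Matrix (Fin n) (Fin n) ℝ} (hA : Nn A) (h : sR A < 1) :
    Ele 1 (1 - A)⁻¹ := by
  intro i j
  have h1 := (inv_facts hA h).1 i j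
  calc (1 : Matrix (Fin n) (Fin n) ℝ) i j = (A ^ 0) i j := by rw [pow_zero]
  _ ≤ (1 - A)⁻¹ i j := by
      have h2 := Summable.le_tsum h1.summable 0 (fun m _ => hA.pow m i j)
      rwa [h1.tsum_eq] at h2

lemma inv_mono {A B : Matrix (Fin n) (Fin n) ℝ} (hA : Nn A) (hAB : Ele A B) (hB : sR B < 1) :
    Ele (1 - A)⁻¹ (1 - B)⁻¹ := by
  have hBnn : Nn B := fun i j => (hA i j).trans (hAB i j)
  have hAlt : sR A < 1 := lt_of_le_of_lt (sR_mono hA hAB) hB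
  intro i j
  exact hasSum_le (fun m => Ele.pow hA hAB m i j) ((inv_facts hA hAlt).1 i j)
    ((inv_facts hBnn hB).1 i j)

lemma partial_le_inv {A : Matrix (Fin n) (Fin n) ℝ} (hA : Nn A) (h : sR A < 1) (N : ℕ) :
    Ele (∑ m ∈ Finset.range N, A ^ m) (1 - A)⁻¹ := by
  intro i j
  have h1 := (inv_facts hA h).1 i j
  have := Summable.sum_le_tsum (Finset.range N) (fun m _ => hA.pow m i j) h1.summable
  rw [h1.tsum_eq] at this
  simpa [Matrix.sum_apply] using this

end INV

end CY

namespace CY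
attribute [local instance] Matrix.linftyOpNormedRing Matrix.linftyOpNormedAlgebra
set_option linter.unusedSectionVars false

variable {n : ℕ} [Nonempty (Fin n)]

lemma Ele.rfl {A : Matrix (Fin n) (Fin n) ℝ} : Ele A A := fun _ _ => le_rfl

lemma Ele.add {A B C D : Matrix (Fin n) (Fin n) ℝ} (h1 : Ele A B) (h2 : Ele C D) :
    Ele (A + C) (B + D) := fun i j => by
  simpa [Matrix.add_apply] using add_le_add (h1 i j) (h2 i j)

lemma Nn.sum {s : Finset ℕ} {f : ℕ → Matrix (Fin n) (Fin n) ℝ} (h : ∀ k ∈ s, Nn (f k)) :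
    Nn (∑ k ∈ s, f k) := fun i j => by
  rw [Matrix.sum_apply]
  exact Finset.sum_nonneg fun k hk => h k hk i j

lemma key_equiv {T F : Matrix (Fin n) (Fin n) ℝ} (hT : Nn T) (hF : Nn F) (hρ : sR T < 1) :
    sR (T + F) < 1 ↔ sR (F * (1 - T)⁻¹) < 1 := by
  set S : Matrix (Fin n) (Fin n) ℝ := (1 - T)⁻¹ with hSdef
  set Q : Matrix (Fin n) (Fin n) ℝ := F * S with hQdef
  have hSnn : Nn S := inv_nn hT hρ
  have hQnn : Nn Q := hF.mul hSnn
  have hTFnn : Nn (T + F) := hT.add hF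
  have h1S : Ele 1 S := one_le_inv hT hρ
  have hTS : T * S = S - 1 := by
    have h := (inv_facts hT hρ).2.1
    rw [← hSdef] at h
    have h' : S - T * S = 1 := by rw [sub_mul, one_mul] at h; exact h
    have h'' : T * S = S - (S - T * S) := by abel
    rw [h'', h']
  set H : ℕ → Matrix (Fin n) (Fin n) ℝ := fun N => ∑ k ∈ Finset.range N, S * Q ^ k with hHdef
  have hHnn : ∀ N, Nn (H N) := fun N => Nn.sum fun k _ => hSnn.mul (hQnn.pow k)
  have hkey : ∀ N, 1 + (T + F) * H N = H N + Q ^ N := by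
    intro N
    have hterm : ∀ k, (T + F) * (S * Q ^ k) = (S * Q ^ k) + (Q ^ (k+1) - Q ^ k) := by
      intro k
      have e : (T + F) * (S * Q ^ k) = (T * S) * Q ^ k + (F * S) * Q ^ k := by noncomm_ring
      rw [e, hTS, ← hQdef, ← pow_succ']
      noncomm_ring
    simp only [hHdef, Finset.mul_sum]
    simp_rw [hterm]
    rw [Finset.sum_add_distrib, Finset.sum_range_sub (fun k => Q ^ k), pow_zero]
    noncomm_ring
  have hEleQS : ∀ N, Ele (Q ^ N) (S * Q ^ N) := by
    intro N
    have := Ele.mul Nn.one (hQnn.pow N) h1S (Ele.rfl (A := Q ^ N))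
    rwa [one_mul] at this
  constructor
  · -- ρ(T+F)<1 → ρ(Q)<1
    intro h
    set P : Matrix (Fin n) (Fin n) ℝ := (1 - (T + F))⁻¹ with hPdef
    have hPnn : Nn P := inv_nn hTFnn h
    have hPid : P * (1 - (T + F)) = 1 := (inv_facts hTFnn h).2.2
    have hST1 : (1 - T) * S = 1 := (inv_facts hT hρ).2.1
    have hPSF : P = S + P * F * S := by
      have e1 : P * (1 - T) = 1 + P * F := by
        have e2 : (1 : Matrix (Fin n) (Fin n) ℝ) - T = (1 - (T + F)) + F := by noncomm_ring
        rw [e2, mul_add, hPid]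
      calc P = P * ((1 - T) * S) := by rw [hST1, mul_one]
      _ = (P * (1 - T)) * S := by rw [mul_assoc]
      _ = (1 + P * F) * S := by rw [e1]
      _ = S + P * F * S := by noncomm_ring
    have hind : ∀ K, Ele (H K) P := by
      intro K
      induction K with
      | zero => intro i j; simp [hHdef, hPnn i j]
      | succ K ih =>
        have hrec : H (K + 1) = S + H K * Q := by
          simp only [hHdef]
          rw [Finset.sum_range_succ' (fun k => S * Q ^ k) K, Finset.sum_mul]
          simp_rw [pow_succ, ← mul_assoc, pow_zero, mul_one]
          abel
        rw [hrec]
        have hstep := Ele.add (Ele.rfl (A := S)) (Ele.mul (hHnn K) hQnn ih (Ele.rfl (A := Q)))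
        refine fun i j => le_trans (hstep i j) ?_
        rw [show S + P * Q = P by rw [hQdef, ← mul_assoc, ← hPSF]]
    apply sR_lt_one_of_bd hQnn
    refine ⟨∑ i, ∑ j, P i j, fun N i j => ?_⟩
    have h1 : (∑ k ∈ Finset.range N, Q ^ k) i j ≤ H N i j := by
      simp only [Matrix.sum_apply, hHdef]
      exact Finset.sum_le_sum fun k _ => hEleQS k i j
    rw [Matrix.sum_apply] at h1
    refine h1.trans ((hind N i j).trans ?_)
    calc P i j ≤ ∑ j, P i j := Finset.single_le_sum (fun l _ => hPnn i l) (Finset.mem_univ j)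
    _ ≤ ∑ i, ∑ j, P i j := Finset.single_le_sum (f := fun i => ∑ j, P i j)
        (fun l _ => Finset.sum_nonneg fun j _ => hPnn l j) (Finset.mem_univ i)
  · -- ρ(Q)<1 → ρ(T+F)<1
    intro h
    obtain ⟨C, hC⟩ := bd_of_sR_lt_one hQnn h
    have hC0 : 0 ≤ C := le_trans (Finset.sum_nonneg fun m _ => hQnn.pow m
      (Classical.arbitrary _) (Classical.arbitrary _)) (hC 1 _ _)
    have hind : ∀ N, Ele (∑ m ∈ Finset.range N, (T + F) ^ m) (H N) := by
      intro N
      induction N with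
      | zero => intro i j; simp [hHdef]
      | succ N ih =>
        have hP : ∑ m ∈ Finset.range (N+1), (T + F) ^ m
            = 1 + (T + F) * ∑ m ∈ Finset.range N, (T + F) ^ m := by
          rw [Finset.sum_range_succ' (fun m => (T + F) ^ m) N, Finset.mul_sum]
          simp_rw [← pow_succ']
          rw [pow_zero]
          abel
        rw [hP]
        have hstep : Ele (1 + (T + F) * ∑ m ∈ Finset.range N, (T + F) ^ m)
            (1 + (T + F) * H N) :=
          Ele.add (Ele.rfl (A := 1)) (Ele.mul hTFnn (hHnn N) (Ele.rfl (A := T + F)) ih)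
        refine fun i j => le_trans (hstep i j) ?_
        rw [hkey N]
        have hrec : H (N+1) = H N + S * Q ^ N := by
          simp only [hHdef]; rw [Finset.sum_range_succ]
        have h2 : Ele (H N + Q ^ N) (H (N+1)) := by
          rw [hrec]
          exact Ele.add (Ele.rfl (A := H N)) (hEleQS N)
        exact h2 i j
    apply sR_lt_one_of_bd hTFnn
    refine ⟨(∑ i, ∑ j, S i j) * C, fun N i j => ?_⟩
    have h2 := hind N i j
    rw [Matrix.sum_apply] at h2
    refine h2.trans ?_
    have hH : H N = S * ∑ k ∈ Finset.range N, Q ^ k := by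
      simp only [hHdef]; rw [Finset.mul_sum]
    rw [hH, Matrix.mul_apply]
    calc ∑ l, S i l * (∑ k ∈ Finset.range N, Q ^ k) l j
        ≤ ∑ l, S i l * C := by
          refine Finset.sum_le_sum fun l _ => mul_le_mul_of_nonneg_left ?_ (hSnn i l)
          rw [Matrix.sum_apply]
          exact hC N l j
    _ = (∑ l, S i l) * C := by rw [Finset.sum_mul]
    _ ≤ (∑ i, ∑ j, S i j) * C := by
        refine mul_le_mul_of_nonneg_right ?_ hC0
        exact Finset.single_le_sum (f := fun i => ∑ l, S i l)
            (fun l _ => Finset.sum_nonneg fun j _ => hSnn l j) (Finset.mem_univ i)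

lemma Nn.smul {A : Matrix (Fin n) (Fin n) ℝ} {c : ℝ} (hc : 0 ≤ c) (hA : Nn A) : Nn (c • A) :=
  fun i j => by rw [Matrix.smul_apply, smul_eq_mul]; exact mul_nonneg hc (hA i j)

lemma Ele.smul {A B : Matrix (Fin n) (Fin n) ℝ} {c : ℝ} (hc : 0 ≤ c) (h : Ele A B) :
    Ele (c • A) (c • B) := fun i j => by
  rw [Matrix.smul_apply, Matrix.smul_apply, smul_eq_mul, smul_eq_mul]
  exact mul_le_mul_of_nonneg_left (h i j) hc

lemma sR_inv_smul_lt_one_iff {A : Matrix (Fin n) (Fin n) ℝ} {s : ℝ} (hs : 0 < s) :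
    sR (s⁻¹ • A) < 1 ↔ sR A < s := by
  have h := sR_smul_lt_iff A (c := s⁻¹) (s := s) (by positivity) hs
  rwa [inv_mul_cancel₀ hs.ne'] at h

lemma r_lt_iff {T F : Matrix (Fin n) (Fin n) ℝ} (hT : Nn T) (hF : Nn F) {s : ℝ}
    (hs : sR T < s) :
    sR (T + F) < s ↔ sR ((s⁻¹ • F) * (1 - s⁻¹ • T)⁻¹) < 1 := by
  have hs0 : 0 < s := lt_of_le_of_lt (sR_nonneg T) hs
  have hsi : (0:ℝ) ≤ s⁻¹ := by positivity
  rw [← sR_inv_smul_lt_one_iff hs0 (A := T + F), smul_add]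
  exact key_equiv (hT.smul hsi) (hF.smul hsi) ((sR_inv_smul_lt_one_iff hs0).2 hs)

lemma bridge1 {T F : Matrix (Fin n) (Fin n) ℝ} (hT : Nn T) (hF : Nn F) (hρ : sR T < 1)
    {s : ℝ} (h1 : 1 ≤ s) (hR : sR (F * (1 - T)⁻¹) < s) : sR (T + F) < s := by
  have hs0 : (0:ℝ) < s := lt_of_lt_of_le one_pos h1
  have hsi : (0:ℝ) ≤ s⁻¹ := by positivity
  have hTs : sR T < s := lt_of_lt_of_le hρ h1
  have hTsnn : Nn (s⁻¹ • T) := hT.smul hsi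
  have hTslt : sR (s⁻¹ • T) < 1 := (sR_inv_smul_lt_one_iff hs0).2 hTs
  rw [r_lt_iff hT hF hTs]
  have hEleT : Ele (s⁻¹ • T) T := fun i j => by
    rw [Matrix.smul_apply, smul_eq_mul]
    nlinarith [hT i j, inv_le_one_of_one_le₀ h1, (by positivity : (0:ℝ) ≤ s⁻¹)]
  have hmono : Ele ((s⁻¹ • F) * (1 - s⁻¹ • T)⁻¹) (s⁻¹ • (F * (1 - T)⁻¹)) := by
    have h2 : Ele (F * (1 - s⁻¹ • T)⁻¹) (F * (1 - T)⁻¹) :=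
      Ele.mul hF (inv_nn hT hρ) Ele.rfl (inv_mono hTsnn hEleT hρ)
    have h3 := h2.smul hsi
    intro i j
    have h4 : (s⁻¹ • F) * (1 - s⁻¹ • T)⁻¹ = s⁻¹ • (F * (1 - s⁻¹ • T)⁻¹) := smul_mul_assoc _ _ _
    rw [h4]
    exact h3 i j
  have h5 : Nn ((s⁻¹ • F) * (1 - s⁻¹ • T)⁻¹) := (hF.smul hsi).mul (inv_nn hTsnn hTslt)
  exact lt_of_le_of_lt (sR_mono h5 hmono) ((sR_inv_smul_lt_one_iff hs0).2 hR)

lemma bridge2 {T F : Matrix (Fin n) (Fin n) ℝ} (hT : Nn T) (hF : Nn F) (hρ : sR T < 1)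
    {s : ℝ} (h1 : s ≤ 1) (hTs : sR T < s) (hr : sR (T + F) < s) :
    sR (F * (1 - T)⁻¹) < s := by
  have hs0 : (0:ℝ) < s := lt_of_le_of_lt (sR_nonneg T) hTs
  have hsi : (0:ℝ) ≤ s⁻¹ := by positivity
  have hTsnn : Nn (s⁻¹ • T) := hT.smul hsi
  have hTslt : sR (s⁻¹ • T) < 1 := (sR_inv_smul_lt_one_iff hs0).2 hTs
  rw [← sR_inv_smul_lt_one_iff hs0]
  have hφ : sR ((s⁻¹ • F) * (1 - s⁻¹ • T)⁻¹) < 1 := (r_lt_iff hT hF hTs).1 hr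
  have hEleT : Ele T (s⁻¹ • T) := fun i j => by
    rw [Matrix.smul_apply, smul_eq_mul]
    nlinarith [hT i j, (one_le_inv_iff₀.2 ⟨hs0, h1⟩ : 1 ≤ s⁻¹)]
  have hmono : Ele (s⁻¹ • (F * (1 - T)⁻¹)) ((s⁻¹ • F) * (1 - s⁻¹ • T)⁻¹) := by
    have h2 : Ele (F * (1 - T)⁻¹) (F * (1 - s⁻¹ • T)⁻¹) :=
      Ele.mul hF (inv_nn hTsnn hTslt) Ele.rfl (inv_mono hT hEleT hTslt)
    have h3 := h2.smul hsi
    intro i j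
    have h4 : (s⁻¹ • F) * (1 - s⁻¹ • T)⁻¹ = s⁻¹ • (F * (1 - s⁻¹ • T)⁻¹) := smul_mul_assoc _ _ _
    rw [h4]
    exact h3 i j
  have h5 : Nn (s⁻¹ • (F * (1 - T)⁻¹)) := (hF.mul (inv_nn hT hρ)).smul hsi
  exact lt_of_le_of_lt (sR_mono h5 hmono) hφ

lemma bridge1c {T F : Matrix (Fin n) (Fin n) ℝ} (hT : Nn T) (hF : Nn F) (hρ : sR T < 1)
    {s c : ℝ} (hc0 : 0 < c) (hs1 : 1 < s)
    (hEle : Ele (c • (1 - T)⁻¹) (1 - s⁻¹ • T)⁻¹)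
    (hr : sR (T + F) < s) : sR (F * (1 - T)⁻¹) < s / c := by
  have hs0 : (0:ℝ) < s := lt_trans one_pos hs1
  have hsi : (0:ℝ) ≤ s⁻¹ := by positivity
  have hTs : sR T < s := lt_trans hρ hs1
  have hTsnn : Nn (s⁻¹ • T) := hT.smul hsi
  have hTslt : sR (s⁻¹ • T) < 1 := (sR_inv_smul_lt_one_iff hs0).2 hTs
  have hφ : sR ((s⁻¹ • F) * (1 - s⁻¹ • T)⁻¹) < 1 := (r_lt_iff hT hF hTs).1 hr
  have hsc : (0:ℝ) < s / c := by positivity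
  rw [← sR_inv_smul_lt_one_iff hsc]
  have hinv : (s / c)⁻¹ • (F * (1 - T)⁻¹) = (s⁻¹ • F) * (c • (1 - T)⁻¹) := by
    rw [smul_mul_assoc, mul_smul_comm, smul_smul]
    congr 1
    field_simp
  have hmono : Ele ((s / c)⁻¹ • (F * (1 - T)⁻¹)) ((s⁻¹ • F) * (1 - s⁻¹ • T)⁻¹) := by
    rw [hinv]
    exact Ele.mul (hF.smul hsi) (inv_nn hTsnn hTslt) Ele.rfl hEle
  have h5 : Nn ((s / c)⁻¹ • (F * (1 - T)⁻¹)) :=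
    (hF.mul (inv_nn hT hρ)).smul (by positivity)
  exact lt_of_le_of_lt (sR_mono h5 hmono) hφ

lemma bridge2c {T F : Matrix (Fin n) (Fin n) ℝ} (hT : Nn T) (hF : Nn F) (hρ : sR T < 1)
    {s c : ℝ} (hc1 : 1 < c) (hTs : sR T < s) (hs1 : s ≤ 1)
    (hEle : Ele (1 - s⁻¹ • T)⁻¹ (c • (1 - T)⁻¹))
    (hr : ¬ sR (T + F) < s) : s / c ≤ sR (F * (1 - T)⁻¹) := by
  have hs0 : (0:ℝ) < s := lt_of_le_of_lt (sR_nonneg T) hTs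
  have hsi : (0:ℝ) ≤ s⁻¹ := by positivity
  have hc0 : (0:ℝ) < c := lt_trans one_pos hc1
  have hTsnn : Nn (s⁻¹ • T) := hT.smul hsi
  have hTslt : sR (s⁻¹ • T) < 1 := (sR_inv_smul_lt_one_iff hs0).2 hTs
  by_contra hcon
  push_neg at hcon
  have hsc : (0:ℝ) < s / c := by positivity
  have hQ : sR ((s / c)⁻¹ • (F * (1 - T)⁻¹)) < 1 := (sR_inv_smul_lt_one_iff hsc).2 hcon
  have hinv : (s / c)⁻¹ • (F * (1 - T)⁻¹) = (s⁻¹ • F) * (c • (1 - T)⁻¹) := by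
    rw [smul_mul_assoc, mul_smul_comm, smul_smul]
    congr 1
    field_simp
  have hmono : Ele ((s⁻¹ • F) * (1 - s⁻¹ • T)⁻¹) ((s / c)⁻¹ • (F * (1 - T)⁻¹)) := by
    rw [hinv]
    exact Ele.mul (hF.smul hsi) ((inv_nn hT hρ).smul hc0.le) Ele.rfl hEle
  have h5 : Nn ((s⁻¹ • F) * (1 - s⁻¹ • T)⁻¹) := (hF.smul hsi).mul (inv_nn hTsnn hTslt)
  have hφ : sR ((s⁻¹ • F) * (1 - s⁻¹ • T)⁻¹) < 1 := lt_of_le_of_lt (sR_mono h5 hmono) hQ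
  exact hr ((r_lt_iff hT hF hTs).2 hφ)

end CY

namespace CY
set_option linter.unusedSectionVars false

variable {n : ℕ} [Nonempty (Fin n)]

lemma zero_pattern {T : Matrix (Fin n) (Fin n) ℝ} (hT : Nn T) (hρ : sR T < 1)
    {i j : Fin n} (hz : (1 - T)⁻¹ i j = 0) {s : ℝ} (hTs : sR T < s) :
    (1 - s⁻¹ • T)⁻¹ i j = 0 := by
  have hs0 : (0:ℝ) < s := lt_of_le_of_lt (sR_nonneg T) hTs
  have h1 := (inv_facts hT hρ).1 i j
  rw [hz] at h1
  have hzero : ∀ m, (T ^ m) i j = 0 := fun m =>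
    congrFun ((hasSum_zero_iff_of_nonneg (fun m => hT.pow m i j)).1 h1) m
  have hTsnn : Nn (s⁻¹ • T) := hT.smul (by positivity)
  have hTslt : sR (s⁻¹ • T) < 1 := (sR_inv_smul_lt_one_iff hs0).2 hTs
  have h2 := (inv_facts hTsnn hTslt).1 i j
  have h3 : (fun m => ((s⁻¹ • T) ^ m) i j) = fun _ => 0 := by
    funext m
    rw [smul_pow, Matrix.smul_apply, hzero m, smul_zero]
  rw [h3] at h2
  exact (h2.unique hasSum_zero)

lemma inv_entry_tendsto {T : Matrix (Fin n) (Fin n) ℝ} (hT : Nn T) (hρ : sR T < 1)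
    (i j : Fin n) :
    Tendsto (fun s : ℝ => (1 - s⁻¹ • T)⁻¹ i j) (𝓝 1) (𝓝 ((1 - T)⁻¹ i j)) := by
  have hST : (1 - T) * (1 - T)⁻¹ = 1 := (inv_facts hT hρ).2.1
  have hdet : (1 - T).det ≠ 0 := by
    intro h
    have := congrArg Matrix.det hST
    rw [Matrix.det_mul, h, zero_mul, Matrix.det_one] at this
    exact zero_ne_one this
  have hcontM : Continuous fun u : ℝ => (1 : Matrix (Fin n) (Fin n) ℝ) - u • T :=
    continuous_const.sub (continuous_id.smul continuous_const)
  have hdetc : Continuous fun u : ℝ => ((1 : Matrix (Fin n) (Fin n) ℝ) - u • T).det :=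
    hcontM.matrix_det
  have hadjc : Continuous fun u : ℝ => ((1 : Matrix (Fin n) (Fin n) ℝ) - u • T).adjugate i j :=
    hcontM.matrix_adjugate.matrix_elem i j
  have hformula : ∀ u : ℝ, ((1 : Matrix (Fin n) (Fin n) ℝ) - u • T)⁻¹ i j
      = (((1 : Matrix (Fin n) (Fin n) ℝ) - u • T).det)⁻¹
        * ((1 : Matrix (Fin n) (Fin n) ℝ) - u • T).adjugate i j := by
    intro u
    rw [Matrix.inv_def, Matrix.smul_apply, Ring.inverse_eq_inv, smul_eq_mul]
  have hinv1 : Tendsto (fun s : ℝ => s⁻¹) (𝓝 (1:ℝ)) (𝓝 (1:ℝ)) := by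
    have := (continuousAt_inv₀ (one_ne_zero (α := ℝ)))
    simpa [ContinuousAt, inv_one] using this
  have hdet2 : Tendsto (fun s : ℝ => (((1:Matrix (Fin n) (Fin n) ℝ) - s⁻¹ • T).det)⁻¹)
      (𝓝 1) (𝓝 (((1:Matrix (Fin n) (Fin n) ℝ) - T).det)⁻¹) := by
    apply Tendsto.inv₀ _ (by simpa using hdet)
    have := hdetc.continuousAt (x := (1:ℝ))
    have h5 := (hdetc.tendsto 1).comp hinv1
    simpa [one_smul, Function.comp_def] using h5
  have hadj2 : Tendsto (fun s : ℝ => ((1:Matrix (Fin n) (Fin n) ℝ) - s⁻¹ • T).adjugate i j)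
      (𝓝 1) (𝓝 (((1:Matrix (Fin n) (Fin n) ℝ) - T).adjugate i j)) := by
    have h5 := (hadjc.tendsto 1).comp hinv1
    simpa [one_smul, Function.comp_def] using h5
  have := hdet2.mul hadj2
  have hgoal : Tendsto (fun s : ℝ => (1 - s⁻¹ • T)⁻¹ i j) (𝓝 1)
      (𝓝 ((((1:Matrix (Fin n) (Fin n) ℝ) - T).det)⁻¹ * ((1:Matrix (Fin n) (Fin n) ℝ) - T).adjugate i j)) := by
    simp_rw [hformula]
    exact this
  have heq : (((1:Matrix (Fin n) (Fin n) ℝ) - T).det)⁻¹ * ((1:Matrix (Fin n) (Fin n) ℝ) - T).adjugate i j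
      = (1 - T)⁻¹ i j := by
    have := hformula 1
    rw [one_smul] at this
    rw [this]
  rwa [heq] at hgoal

lemma cont_below {T : Matrix (Fin n) (Fin n) ℝ} (hT : Nn T) (hρ : sR T < 1) {c : ℝ}
    (hc : 1 < c) :
    ∀ᶠ s in 𝓝[<] (1:ℝ), sR T < s ∧ s ≤ 1 ∧ Ele (1 - s⁻¹ • T)⁻¹ (c • (1 - T)⁻¹) := by
  have hbase : ∀ᶠ s in 𝓝[<] (1:ℝ), s ∈ Ioo (sR T) 1 :=
    Filter.eventually_of_mem (Ioo_mem_nhdsLT hρ) (fun _ h => h)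
  have hEle : ∀ᶠ s in 𝓝[<] (1:ℝ), ∀ i : Fin n, ∀ j : Fin n,
      (1 - s⁻¹ • T)⁻¹ i j ≤ (c • (1 - T)⁻¹) i j := by
    rw [eventually_all]
    intro i
    rw [eventually_all]
    intro j
    by_cases hz : (1 - T)⁻¹ i j = 0
    · filter_upwards [hbase] with s hs
      rw [zero_pattern hT hρ hz hs.1, Matrix.smul_apply, hz, smul_zero]
    · have hpos : 0 < (1 - T)⁻¹ i j := lt_of_le_of_ne (inv_nn hT hρ i j) (Ne.symm hz)
      have hlim : Tendsto (fun s : ℝ => (1 - s⁻¹ • T)⁻¹ i j) (𝓝[<] (1:ℝ)) (𝓝 ((1 - T)⁻¹ i j)) :=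
        (inv_entry_tendsto hT hρ i j).mono_left (nhdsWithin_le_nhds (s := Iio (1:ℝ)))
      have hlt : (1 - T)⁻¹ i j < c * (1 - T)⁻¹ i j := by nlinarith
      filter_upwards [hlim.eventually_lt_const hlt] with s hs
      rw [Matrix.smul_apply, smul_eq_mul]
      exact hs.le
  filter_upwards [hbase, hEle] with s h1 h2
  exact ⟨h1.1, h1.2.le, fun i j => h2 i j⟩

lemma cont_above {T : Matrix (Fin n) (Fin n) ℝ} (hT : Nn T) (hρ : sR T < 1) {c : ℝ}
    (hc0 : 0 < c) (hc : c < 1) :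
    ∀ᶠ s in 𝓝[>] (1:ℝ), 1 < s ∧ Ele (c • (1 - T)⁻¹) (1 - s⁻¹ • T)⁻¹ := by
  have hbase : ∀ᶠ s in 𝓝[>] (1:ℝ), 1 < s :=
    Filter.eventually_of_mem self_mem_nhdsWithin (fun _ h => h)
  have hEle : ∀ᶠ s in 𝓝[>] (1:ℝ), ∀ i : Fin n, ∀ j : Fin n,
      (c • (1 - T)⁻¹) i j ≤ (1 - s⁻¹ • T)⁻¹ i j := by
    rw [eventually_all]
    intro i
    rw [eventually_all]
    intro j
    by_cases hz : (1 - T)⁻¹ i j = 0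
    · filter_upwards [hbase] with s hs
      have hTs : sR T < s := lt_trans hρ hs
      have hs0 : (0:ℝ) < s := lt_trans one_pos hs
      have hnn : Nn (1 - s⁻¹ • T)⁻¹ :=
        inv_nn (hT.smul (by positivity)) ((sR_inv_smul_lt_one_iff hs0).2 hTs)
      rw [Matrix.smul_apply, hz, smul_zero]
      exact hnn i j
    · have hpos : 0 < (1 - T)⁻¹ i j := lt_of_le_of_ne (inv_nn hT hρ i j) (Ne.symm hz)
      have hlim : Tendsto (fun s : ℝ => (1 - s⁻¹ • T)⁻¹ i j) (𝓝[>] (1:ℝ)) (𝓝 ((1 - T)⁻¹ i j)) :=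
        (inv_entry_tendsto hT hρ i j).mono_left (nhdsWithin_le_nhds (s := Ioi (1:ℝ)))
      have hlt : c * (1 - T)⁻¹ i j < (1 - T)⁻¹ i j := by nlinarith
      filter_upwards [hlim.eventually_const_lt hlt] with s hs
      rw [Matrix.smul_apply, smul_eq_mul]
      exact hs.le
  filter_upwards [hbase, hEle] with s h1 h2
  exact ⟨h1, fun i j => h2 i j⟩

end CY

namespace CY
set_option linter.unusedSectionVars false

variable {n : ℕ} [Nonempty (Fin n)]

lemma R0_le_one {T F : Matrix (Fin n) (Fin n) ℝ} (hT : Nn T) (hF : Nn F) (hρ : sR T < 1)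
    (hr1 : sR (T + F) ≤ 1) : sR (F * (1 - T)⁻¹) ≤ 1 := by
  by_contra hx
  push_neg at hx
  set R₀ := sR (F * (1 - T)⁻¹) with hR0
  have hR0pos : 0 < R₀ := lt_trans one_pos hx
  set c : ℝ := (1 + R₀⁻¹) / 2 with hc
  have hc0 : 0 < c := by positivity
  have hc1 : c < 1 := by
    have : R₀⁻¹ < 1 := inv_lt_one_of_one_lt₀ hx
    simp only [hc]; linarith
  have hcR : 1 < c * R₀ := by
    have : c * R₀ = (R₀ + 1) / 2 := by rw [hc]; field_simp
    rw [this]; linarith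
  have hev := (cont_above hT hρ hc0 hc1).and
    (Filter.eventually_of_mem (Ioo_mem_nhdsGT hcR) (fun s h => h))
  obtain ⟨s, ⟨hs1, hEle⟩, hsIoo⟩ := hev.exists
  have hbr := bridge1c hT hF hρ hc0 hs1 hEle (lt_of_le_of_lt hr1 hs1)
  have : s / c < R₀ := by
    rw [div_lt_iff₀ hc0]
    calc s < c * R₀ := (Set.mem_Ioo.1 hsIoo).2
    _ = R₀ * c := mul_comm _ _
  exact absurd hbr (not_lt.2 this.le)

lemma R0_ge_one {T F : Matrix (Fin n) (Fin n) ℝ} (hT : Nn T) (hF : Nn F) (hρ : sR T < 1)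
    (hr1 : 1 ≤ sR (T + F)) : 1 ≤ sR (F * (1 - T)⁻¹) := by
  by_contra hx
  push_neg at hx
  set R₀ := sR (F * (1 - T)⁻¹) with hR0
  have hR0nn : 0 ≤ R₀ := sR_nonneg _
  set c : ℝ := 1 + (1 - R₀) / 4 with hc
  have hc1 : 1 < c := by simp only [hc]; linarith
  have hcR : c * R₀ ≤ (3 * R₀ + 1) / 4 := by
    simp only [hc]; nlinarith
  have hq : (3 * R₀ + 1) / 4 < 1 := by linarith
  have hev := (cont_below hT hρ hc1).and
    (Filter.eventually_of_mem (Ioo_mem_nhdsLT hq) (fun s h => h))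
  obtain ⟨s, ⟨hTs, hs1, hEle⟩, hsIoo⟩ := hev.exists
  have hnr : ¬ sR (T + F) < s := not_lt.2 (le_trans hs1 hr1)
  have hbr := bridge2c hT hF hρ hc1 hTs hs1 hEle hnr
  have hc0 : (0:ℝ) < c := lt_trans one_pos hc1
  have : s ≤ c * R₀ := by
    rw [div_le_iff₀ hc0, mul_comm] at hbr
    exact hbr
  rw [Set.mem_Ioo] at hsIoo
  rw [← hR0] at hbr
  have h9 : (3 * R₀ + 1) / 4 < c * R₀ := lt_of_lt_of_le hsIoo.1 this
  linarith

lemma main_pos {T F : Matrix (Fin n) (Fin n) ℝ} (hT : Nn T) (hF : Nn F) (hρ : sR T < 1) :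
    (sR (T + F) = 1 ∧ sR (F * (1 - T)⁻¹) = 1) ∨
    (1 < sR (T + F) ∧ sR (T + F) ≤ sR (F * (1 - T)⁻¹)) ∨
    (0 ≤ sR (F * (1 - T)⁻¹) ∧ sR (F * (1 - T)⁻¹) ≤ sR (T + F) ∧ sR (T + F) < 1) := by
  set r := sR (T + F) with hrdef
  set R₀ := sR (F * (1 - T)⁻¹) with hRdef
  have hTr : sR T ≤ r := by
    apply sR_mono hT
    intro i j
    have := hF i j
    rw [Matrix.add_apply]
    linarith
  rcases lt_trichotomy r 1 with hlt | heq | hgt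
  · right; right
    refine ⟨sR_nonneg _, ?_, hlt⟩
    by_contra hx
    push_neg at hx
    set s : ℝ := min ((r + R₀) / 2) 1 with hs
    have hrs : r < s := by
      simp only [hs, lt_min_iff]
      constructor <;> linarith
    have hs1 : s ≤ 1 := min_le_right _ _
    have hTs : sR T < s := lt_of_le_of_lt hTr hrs
    have hbr := bridge2 hT hF hρ hs1 hTs hrs
    have : s ≤ (r + R₀) / 2 := min_le_left _ _
    rw [← hRdef] at hbr
    linarith
  · left
    refine ⟨heq, le_antisymm (R0_le_one hT hF hρ heq.le) (R0_ge_one hT hF hρ heq.ge)⟩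
  · right; left
    refine ⟨hgt, ?_⟩
    by_contra hx
    push_neg at hx
    set s : ℝ := (max R₀ 1 + r) / 2 with hs
    have hmax : max R₀ 1 < r := max_lt hx hgt
    have hs1 : 1 ≤ s := by
      have : (1:ℝ) ≤ max R₀ 1 := le_max_right _ _
      simp only [hs]; linarith
    have hRs : R₀ < s := by
      have : R₀ ≤ max R₀ 1 := le_max_left _ _
      simp only [hs]; linarith
    have hbr := bridge1 hT hF hρ hs1 (by rw [← hRdef]; exact hRs)
    have : s < r := by simp only [hs]; linarith
    rw [← hrdef] at hbr
    linarith

end CY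

section Final

lemma sR_zero_n0 (A : Matrix (Fin 0) (Fin 0) ℝ) : CY.sR A = 0 := by
  haveI : Subsingleton (Matrix (Fin 0) (Fin 0) ℂ) := ⟨fun a b => by ext i; exact i.elim0⟩
  have hsp : spectrum ℂ (A.map Complex.ofReal) = ∅ := by
    ext z
    simp [spectrum.mem_iff, isUnit_of_subsingleton]
  rw [CY.sR, spectralRadius, hsp]
  simp

end Final

theorem cushing_yicang_general {n : ℕ} (T F : Matrix (Fin n) (Fin n) ℝ)
    (hT : ∀ i j, 0 ≤ T i j) (hF : ∀ i j, 0 ≤ F i j)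
    (hρ : specRad T < 1)
    (r : ℝ) (hr : r = specRad (T + F))
    (R₀ : ℝ) (hR : R₀ = specRad (F * (1 - T)⁻¹)) :
    (r = 1 ∧ R₀ = 1) ∨ (1 < r ∧ r ≤ R₀) ∨ (0 ≤ R₀ ∧ R₀ ≤ r ∧ r < 1) := by
  rcases Nat.eq_zero_or_pos n with h0 | hpos
  · right; right
    subst h0
    have e : ∀ A : Matrix (Fin 0) (Fin 0) ℝ, specRad A = 0 := fun A => sR_zero_n0 A
    rw [hr, hR, e, e]
    norm_num
  · haveI : Nonempty (Fin n) := ⟨⟨0, hpos⟩⟩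
    have h := CY.main_pos (T := T) (F := F) hT hF hρ
    rw [hr, hR]
    exact h
end

section
/- Let T and F be nonnegative n×n matrices with ρ(T) < 1 and Q = F(I−T)^{-1}, R₀ = ρ(Q) > 0. Then ρ(T + F/R₀) = 1. -/
open Matrix Filter Topology

attribute [local instance] Matrix.linftyOpNormedRing Matrix.linftyOpNormedAlgebra

open scoped NNReal ENNReal Pointwise
set_option maxHeartbeats 1000000
set_option synthInstance.maxHeartbeats 100000

namespace SRAux

variable {n : ℕ}

/-- complexification -/
def CM (A : Matrix (Fin n) (Fin n) ℝ) : Matrix (Fin n) (Fin n) ℂ := A.map Complex.ofReal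

lemma CM_apply (A : Matrix (Fin n) (Fin n) ℝ) (i j) : CM A i j = (A i j : ℂ) := rfl

lemma CM_mul (A B : Matrix (Fin n) (Fin n) ℝ) : CM (A * B) = CM A * CM B :=
  Matrix.map_mul (f := Complex.ofRealHom)

lemma CM_one : CM (1 : Matrix (Fin n) (Fin n) ℝ) = 1 :=
  Matrix.map_one _ Complex.ofReal_zero Complex.ofReal_one

lemma CM_pow (A : Matrix (Fin n) (Fin n) ℝ) (k : ℕ) : CM (A ^ k) = CM A ^ k := by
  induction k with
  | zero => simpa using CM_one
  | succ k ih => rw [pow_succ, pow_succ, CM_mul, ih]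

lemma CM_add (A B : Matrix (Fin n) (Fin n) ℝ) : CM (A + B) = CM A + CM B := by
  ext i j
  simp [CM_apply, Matrix.add_apply]

lemma CM_smul (r : ℝ) (A : Matrix (Fin n) (Fin n) ℝ) : CM (r • A) = (r : ℂ) • CM A := by
  ext i j; simp [CM_apply, Matrix.smul_apply]

lemma nnnorm_CM (A : Matrix (Fin n) (Fin n) ℝ) : ‖CM A‖₊ = ‖A‖₊ := by
  rw [Matrix.linfty_opNNNorm_def, Matrix.linfty_opNNNorm_def]
  congr 1; ext i; congr 1; ext j
  simp [CM_apply]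

lemma entry_nnnorm_le {α : Type*} [NormedRing α] (A : Matrix (Fin n) (Fin n) α) (i j) :
    ‖A i j‖₊ ≤ ‖A‖₊ := by
  rw [Matrix.linfty_opNNNorm_def]
  exact le_trans (Finset.single_le_sum (f := fun j => ‖A i j‖₊) (fun _ _ => zero_le)
    (Finset.mem_univ j)) (Finset.le_sup (f := fun i => ∑ j, ‖A i j‖₊) (Finset.mem_univ i))

lemma nnnorm_le_sum {α : Type*} [NormedRing α] (A : Matrix (Fin n) (Fin n) α) :
    ‖A‖₊ ≤ ∑ i, ∑ j, ‖A i j‖₊ := by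
  rw [Matrix.linfty_opNNNorm_def]
  exact Finset.sup_le fun i _ => Finset.single_le_sum
    (f := fun i => ∑ j, ‖A i j‖₊) (fun _ _ => zero_le) (Finset.mem_univ i)

lemma nnnorm_le_of_entries_le {A : Matrix (Fin n) (Fin n) ℂ} {B : Matrix (Fin n) (Fin n) ℝ}
    (h : ∀ i j, ‖A i j‖ ≤ B i j) : ‖A‖₊ ≤ ‖B‖₊ := by
  rw [Matrix.linfty_opNNNorm_def, Matrix.linfty_opNNNorm_def]
  refine Finset.sup_le fun i _ => le_trans (Finset.sum_le_sum fun j _ => ?_)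
    (Finset.le_sup (f := fun i => ∑ j, ‖B i j‖₊) (Finset.mem_univ i))
  have h0 : (0:ℝ) ≤ B i j := le_trans (norm_nonneg _) (h i j)
  rw [← NNReal.coe_le_coe, coe_nnnorm, coe_nnnorm, Real.norm_of_nonneg h0]
  exact h i j


lemma spectralRadius_ne_top [Nonempty (Fin n)] (A : Matrix (Fin n) (Fin n) ℂ) : spectralRadius ℂ A ≠ ⊤ := by
  have h := spectrum.spectralRadius_le_pow_nnnorm_pow_one_div ℂ A 0
  refine ne_top_of_le_ne_top ?_ h
  norm_num

/-- geometric bound from spectral radius -/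
lemma pow_nnnorm_le_of_lt (A : Matrix (Fin n) (Fin n) ℂ) {θ : ℝ≥0}
    (h : spectralRadius ℂ A < θ) :
    ∃ C : ℝ≥0, 1 ≤ C ∧ ∀ k, ‖A ^ k‖₊ ≤ C * θ ^ k := by
  have hθ0 : θ ≠ 0 := by
    rintro rfl
    simp at h
  have hg := spectrum.pow_nnnorm_pow_one_div_tendsto_nhds_spectralRadius A
  have hev : ∀ᶠ k : ℕ in atTop, (‖A ^ k‖₊ : ℝ≥0∞) ^ (1 / (k : ℝ)) < (θ : ℝ≥0∞) :=
    hg.eventually_lt_const h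
  obtain ⟨N, hN⟩ := eventually_atTop.mp hev
  have hbig : ∀ k, N ≤ k → 1 ≤ k → ‖A ^ k‖₊ ≤ θ ^ k := by
    intro k hk hk1
    have h2 := ENNReal.rpow_le_rpow (hN k hk).le (by positivity : (0:ℝ) ≤ (k:ℝ))
    rw [← ENNReal.rpow_mul, one_div,
      inv_mul_cancel₀ (by exact_mod_cast Nat.one_le_iff_ne_zero.mp hk1 : (k:ℝ) ≠ 0),
      ENNReal.rpow_one, ENNReal.rpow_natCast] at h2
    exact_mod_cast h2
  set C : ℝ≥0 := 1 + (Finset.range (max N 1)).sup fun k => ‖A ^ k‖₊ / θ ^ k with hC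
  refine ⟨C, le_self_add, fun k => ?_⟩
  rcases lt_or_ge k (max N 1) with hk | hk
  · have h1 : ‖A ^ k‖₊ / θ ^ k ≤ C := by
      rw [hC]
      exact le_trans (Finset.le_sup (f := fun k => ‖A ^ k‖₊ / θ ^ k)
        (Finset.mem_range.mpr hk)) le_add_self
    have hθk : (θ : ℝ≥0) ^ k ≠ 0 := pow_ne_zero _ hθ0
    calc ‖A ^ k‖₊ = ‖A ^ k‖₊ / θ ^ k * θ ^ k := by rw [div_mul_cancel₀ _ hθk]
    _ ≤ C * θ ^ k := mul_le_mul_left h1 _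
  · have := hbig k (le_trans (le_max_left _ _) hk) (le_trans (le_max_right _ _) hk)
    calc ‖A ^ k‖₊ ≤ θ ^ k := this
    _ = 1 * θ ^ k := (one_mul _).symm
    _ ≤ C * θ ^ k := mul_le_mul_left le_self_add _

/-- spectral radius bound from geometric bound on powers -/
lemma spectralRadius_le_of_pow_bound [Nonempty (Fin n)] (A : Matrix (Fin n) (Fin n) ℂ) {θ C : ℝ≥0}
    (h : ∀ k, ‖A ^ k‖₊ ≤ C * θ ^ k) : spectralRadius ℂ A ≤ θ := by
  set D : ℝ≥0 := C * ‖(1 : Matrix (Fin n) (Fin n) ℂ)‖₊ with hD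
  have key : ∀ k : ℕ, spectralRadius ℂ A ≤ (D : ℝ≥0∞) ^ (1 / (k + 1 : ℝ)) * θ := by
    intro k
    have h1 := spectrum.spectralRadius_le_pow_nnnorm_pow_one_div ℂ A k
    have he : (0:ℝ) ≤ 1 / (k + 1 : ℝ) := by positivity
    have h2 : ((‖A ^ (k+1)‖₊ : ℝ≥0∞)) ^ (1 / (k + 1 : ℝ)) ≤
        ((C * θ ^ (k+1) : ℝ≥0) : ℝ≥0∞) ^ (1 / (k + 1 : ℝ)) :=
      ENNReal.rpow_le_rpow (by exact_mod_cast h (k+1)) he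
    have h3 : ((C * θ ^ (k+1) : ℝ≥0) : ℝ≥0∞) ^ (1 / (k + 1 : ℝ)) =
        (C : ℝ≥0∞) ^ (1 / (k + 1 : ℝ)) * θ := by
      rw [ENNReal.coe_mul, ENNReal.mul_rpow_of_nonneg _ _ he]
      congr 1
      rw [ENNReal.coe_pow, ← ENNReal.rpow_natCast (θ : ℝ≥0∞) (k+1), ← ENNReal.rpow_mul]
      have hx : ((k+1 : ℕ) : ℝ) * (1 / (k + 1 : ℝ)) = 1 := by
        push_cast
        field_simp
      rw [hx, ENNReal.rpow_one]
    calc spectralRadius ℂ A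
        ≤ (‖A ^ (k+1)‖₊ : ℝ≥0∞) ^ (1 / (k + 1 : ℝ)) *
          (‖(1 : Matrix (Fin n) (Fin n) ℂ)‖₊ : ℝ≥0∞) ^ (1 / (k + 1 : ℝ)) := by
          exact_mod_cast h1
    _ ≤ (C : ℝ≥0∞) ^ (1 / (k + 1 : ℝ)) * θ *
          (‖(1 : Matrix (Fin n) (Fin n) ℂ)‖₊ : ℝ≥0∞) ^ (1 / (k + 1 : ℝ)) := by
          exact mul_le_mul_left (h2.trans_eq h3) _
    _ = (D : ℝ≥0∞) ^ (1 / (k + 1 : ℝ)) * θ := by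
          rw [hD, ENNReal.coe_mul, ENNReal.mul_rpow_of_nonneg _ _ he]
          ring
  rcases eq_or_ne (D : ℝ≥0∞) 0 with hD0 | hD0
  · have := key 0
    rw [hD0, ENNReal.zero_rpow_of_pos (by norm_num), zero_mul] at this
    exact le_trans this (zero_le)
  · refine ENNReal.le_of_forall_lt_one_mul_le fun a ha => ?_
    rcases eq_or_ne a 0 with rfl | ha0
    · simp
    have hainv : 1 < a⁻¹ := ENNReal.one_lt_inv.mpr ha
    obtain ⟨N, hN⟩ := eventually_atTop.mp (ENNReal.eventually_pow_one_div_le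
      (ENNReal.coe_ne_top : (D : ℝ≥0∞) ≠ ⊤) hainv)
    have hk := hN (N + 1) (Nat.le_succ N)
    rw [Nat.cast_add, Nat.cast_one] at hk
    have h4 : spectralRadius ℂ A ≤ a⁻¹ * ↑θ := le_trans (key N) (mul_le_mul_left hk _)
    calc a * spectralRadius ℂ A ≤ a * (a⁻¹ * θ) := mul_le_mul_right h4 _
    _ = a * a⁻¹ * θ := by rw [mul_assoc]
    _ = θ := by rw [ENNReal.mul_inv_cancel ha0 (ha.trans ENNReal.one_lt_top).ne, one_mul]

lemma pow_entries_nonneg {X : Matrix (Fin n) (Fin n) ℝ} (hX : ∀ i j, 0 ≤ X i j) (k : ℕ) :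
    ∀ i j, 0 ≤ (X ^ k) i j := by
  induction k with
  | zero =>
    intro i j
    rw [pow_zero]
    by_cases h : i = j <;> simp [Matrix.one_apply, h]
  | succ k ih =>
    intro i j
    rw [pow_succ, Matrix.mul_apply]
    exact Finset.sum_nonneg fun l _ => mul_nonneg (ih i l) (hX l j)

lemma mul_entries_nonneg {X Y : Matrix (Fin n) (Fin n) ℝ} (hX : ∀ i j, 0 ≤ X i j)
    (hY : ∀ i j, 0 ≤ Y i j) : ∀ i j, 0 ≤ (X * Y) i j := fun i j => by
  rw [Matrix.mul_apply]
  exact Finset.sum_nonneg fun l _ => mul_nonneg (hX i l) (hY l j)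

lemma pow_entry_bound {A : Matrix (Fin n) (Fin n) ℂ} {B : Matrix (Fin n) (Fin n) ℝ} {c : ℝ}
    (hc : 0 ≤ c) (hB : ∀ i j, 0 ≤ B i j) (h : ∀ i j, ‖A i j‖ ≤ c * B i j) (k : ℕ) :
    ∀ i j, ‖(A ^ k) i j‖ ≤ c ^ k * (B ^ k) i j := by
  induction k with
  | zero =>
    intro i j
    rw [pow_zero, pow_zero, pow_zero, one_mul]
    by_cases hij : i = j <;> simp [Matrix.one_apply, hij]
  | succ k ih =>
    intro i j
    simp only [pow_succ, Matrix.mul_apply, Finset.mul_sum]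
    refine le_trans (norm_sum_le _ _) (Finset.sum_le_sum fun l _ => ?_)
    rw [norm_mul]
    have h5 := mul_le_mul (ih i l) (h l j) (norm_nonneg _)
      (mul_nonneg (pow_nonneg hc k) (pow_entries_nonneg hB k i l))
    exact le_trans h5 (le_of_eq (by ring))

lemma spectralRadius_le_scale [Nonempty (Fin n)] {A : Matrix (Fin n) (Fin n) ℂ}
    {B : Matrix (Fin n) (Fin n) ℝ} {c : ℝ} (hc : 0 ≤ c) (hB : ∀ i j, 0 ≤ B i j)
    (h : ∀ i j, ‖A i j‖ ≤ c * B i j) :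
    spectralRadius ℂ A ≤ (c.toNNReal : ℝ≥0∞) * spectralRadius ℂ (CM B) := by
  set c' := c.toNNReal with hc'
  have main : ∀ θ : ℝ≥0, spectralRadius ℂ (CM B) < θ →
      spectralRadius ℂ A ≤ ((c' * θ : ℝ≥0) : ℝ≥0∞) := by
    intro θ hθ
    obtain ⟨C, hC1, hC⟩ := pow_nnnorm_le_of_lt (CM B) hθ
    refine spectralRadius_le_of_pow_bound A (C := C) fun k => ?_
    have h1 : ‖A ^ k‖₊ ≤ ‖(c ^ k) • (B ^ k)‖₊ := by
      apply nnnorm_le_of_entries_le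
      intro i j
      rw [Matrix.smul_apply, smul_eq_mul]
      exact pow_entry_bound hc hB h k i j
    have h2 : ‖(c ^ k) • (B ^ k)‖₊ = c' ^ k * ‖B ^ k‖₊ := by
      rw [nnnorm_smul]
      congr 1
      ext
      rw [coe_nnnorm, Real.norm_of_nonneg (pow_nonneg hc k), hc', NNReal.coe_pow,
        Real.coe_toNNReal _ hc]
    have h3 : ‖B ^ k‖₊ = ‖(CM B) ^ k‖₊ := by rw [← CM_pow, nnnorm_CM]
    calc ‖A ^ k‖₊ ≤ c' ^ k * ‖(CM B) ^ k‖₊ := by rw [← h3, ← h2]; exact h1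
    _ ≤ c' ^ k * (C * θ ^ k) := mul_le_mul_right (hC k) _
    _ = C * (c' * θ) ^ k := by rw [mul_pow]; ring
  rcases eq_or_ne (c' : ℝ≥0∞) 0 with hc0 | hc0
  · obtain ⟨θ, hθ1, hθ2⟩ := ENNReal.lt_iff_exists_nnreal_btwn.mp
      (lt_top_iff_ne_top.mpr (spectralRadius_ne_top (CM B)))
    have h4 := main θ hθ1
    have : ((c' * θ : ℝ≥0) : ℝ≥0∞) = 0 := by
      rw [ENNReal.coe_mul, hc0, zero_mul]
    rw [this] at h4
    exact le_trans h4 (zero_le)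
  · refine le_of_forall_gt_imp_ge_of_dense fun a ha => ?_
    have hct : (c' : ℝ≥0∞) ≠ ⊤ := ENNReal.coe_ne_top
    have h1 : spectralRadius ℂ (CM B) < a / c' := by
      rw [ENNReal.lt_div_iff_mul_lt (Or.inl hc0) (Or.inl hct), mul_comm]
      exact ha
    obtain ⟨θ, hθ1, hθ2⟩ := ENNReal.lt_iff_exists_nnreal_btwn.mp h1
    calc spectralRadius ℂ A ≤ ((c' * θ : ℝ≥0) : ℝ≥0∞) := main θ hθ1
    _ = (c' : ℝ≥0∞) * θ := by norm_cast
    _ ≤ (c' : ℝ≥0∞) * (a / c') := mul_le_mul_right hθ2.le _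
    _ = a := ENNReal.mul_div_cancel hc0 hct

lemma spectralRadius_smul {c : ℂ} (hc : c ≠ 0) (A : Matrix (Fin n) (Fin n) ℂ) :
    spectralRadius ℂ (c • A) = (‖c‖₊ : ℝ≥0∞) * spectralRadius ℂ A := by
  have hσ : spectrum ℂ (c • A) = c • spectrum ℂ A := by
    simpa [Units.smul_def] using spectrum.unit_smul_eq_smul A (Units.mk0 c hc)
  rw [spectralRadius, spectralRadius, hσ, ← Set.image_smul, iSup_image]
  simp_rw [smul_eq_mul, nnnorm_mul, ENNReal.coe_mul, ENNReal.mul_iSup]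

lemma spectralRadius_lt_one_of_pow [Nonempty (Fin n)] {A : Matrix (Fin n) (Fin n) ℂ} {m : ℕ}
    (hm : m ≠ 0) (h : ‖A ^ m‖₊ < 1) : spectralRadius ℂ A < 1 := by
  set q := ‖A ^ m‖₊ with hq
  have key : ∀ z ∈ spectrum ℂ A, (‖z‖₊ : ℝ≥0∞) ≤ ((q ^ (1 / (m:ℝ)) : ℝ≥0) : ℝ≥0∞) := by
    intro z hz
    have hzm : z ^ m ∈ spectrum ℂ (A ^ m) := by
      have himg : z ^ m ∈ (fun k => Polynomial.eval k (Polynomial.X ^ m : Polynomial ℂ)) ''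
          spectrum ℂ A := ⟨z, hz, by simp⟩
      have := spectrum.subset_polynomial_aeval A (Polynomial.X ^ m : Polynomial ℂ) himg
      simpa using this
    have h1 : ‖z ^ m‖ ≤ ‖A ^ m‖ := spectrum.norm_le_norm_of_mem hzm
    have h2 : ‖z‖₊ ^ m ≤ q := by
      rw [hq, ← nnnorm_pow]
      exact_mod_cast h1
    have h3 : ((‖z‖₊ ^ m : ℝ≥0)) ^ (1/(m:ℝ)) ≤ q ^ (1/(m:ℝ)) :=
      NNReal.rpow_le_rpow h2 (by positivity)
    rw [← NNReal.rpow_natCast ‖z‖₊ m, ← NNReal.rpow_mul, mul_one_div,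
      div_self (by exact_mod_cast hm : (m:ℝ) ≠ 0), NNReal.rpow_one] at h3
    exact_mod_cast h3
  have hρ : spectralRadius ℂ A ≤ ((q ^ (1/(m:ℝ)) : ℝ≥0) : ℝ≥0∞) := iSup₂_le key
  refine lt_of_le_of_lt hρ ?_
  rw [← ENNReal.coe_one, ENNReal.coe_lt_coe]
  exact NNReal.rpow_lt_one h (by positivity)

lemma tsum_sub_succ {E : Type*} [NormedAddCommGroup E] [CompleteSpace E] {a : ℕ → E}
    (h : Summable a) : ∑' k, (a k - a (k + 1)) = a 0 := by
  have h2 : Summable fun k => a (k + 1) := (summable_nat_add_iff 1).2 h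
  have hs : Summable fun k => a k - a (k + 1) := h.sub h2
  have t1 : Tendsto (fun N => ∑ k ∈ Finset.range N, (a k - a (k + 1))) atTop
      (𝓝 (∑' k, (a k - a (k + 1)))) := hs.hasSum.tendsto_sum_nat
  have heq : (fun N => ∑ k ∈ Finset.range N, (a k - a (k + 1))) = fun N => a 0 - a N := by
    funext N
    exact Finset.sum_range_sub' a N
  rw [heq] at t1
  have t0 : Tendsto (fun k => a k) atTop (𝓝 0) := h.tendsto_atTop_zero
  have t2 : Tendsto (fun N => a 0 - a N) atTop (𝓝 (a 0 - 0)) := tendsto_const_nhds.sub t0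
  rw [sub_zero] at t2
  exact tendsto_nhds_unique t1 t2

/-- geometric norm bound on powers -/
def GeomBdd (X : Matrix (Fin n) (Fin n) ℝ) : Prop :=
  ∃ C θ : ℝ≥0, θ < 1 ∧ ∀ k, ‖X ^ k‖₊ ≤ C * θ ^ k

lemma geomBdd_of_lt_one {X : Matrix (Fin n) (Fin n) ℝ}
    (h : spectralRadius ℂ (CM X) < 1) : GeomBdd X := by
  obtain ⟨θ, hθ1, hθ2⟩ := ENNReal.lt_iff_exists_nnreal_btwn.mp h
  obtain ⟨C, hC1, hC⟩ := pow_nnnorm_le_of_lt (CM X) hθ1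
  refine ⟨C, θ, by exact_mod_cast hθ2, fun k => ?_⟩
  rw [← nnnorm_CM, CM_pow]
  exact hC k

lemma GeomBdd.entry_bound {X : Matrix (Fin n) (Fin n) ℝ} (hb : GeomBdd X) :
    ∃ C θ : ℝ, 0 ≤ C ∧ 0 ≤ θ ∧ θ < 1 ∧ ∀ k i j, |(X ^ k) i j| ≤ C * θ ^ k := by
  obtain ⟨C, θ, hθ, hC⟩ := hb
  refine ⟨C, θ, C.2, θ.2, by exact_mod_cast hθ, fun k i j => ?_⟩
  have h1 : ‖(X ^ k) i j‖₊ ≤ C * θ ^ k := le_trans (entry_nnnorm_le _ i j) (hC k)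
  have h2 : |(X ^ k) i j| = ((‖(X ^ k) i j‖₊ : ℝ)) := by
    rw [coe_nnnorm, Real.norm_eq_abs]
  rw [h2]
  exact_mod_cast h1

lemma GeomBdd.entry_summable {X : Matrix (Fin n) (Fin n) ℝ} (hb : GeomBdd X) (i j : Fin n) :
    Summable fun k => (X ^ k) i j := by
  obtain ⟨C, θ, hC0, hθ0, hθ1, hB⟩ := hb.entry_bound
  refine Summable.of_norm_bounded (g := fun k => C * θ ^ k)
    ((summable_geometric_of_lt_one hθ0 hθ1).mul_left C) fun k => ?_
  rw [Real.norm_eq_abs]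
  exact hB k i j

/-- Neumann series -/
noncomputable def neu (X : Matrix (Fin n) (Fin n) ℝ) : Matrix (Fin n) (Fin n) ℝ :=
  Matrix.of fun i j => ∑' k, (X ^ k) i j

lemma neu_apply (X : Matrix (Fin n) (Fin n) ℝ) (i j : Fin n) :
    neu X i j = ∑' k, (X ^ k) i j := rfl

lemma GeomBdd.one_sub_mul_neu {X : Matrix (Fin n) (Fin n) ℝ} (hb : GeomBdd X) :
    (1 - X) * neu X = 1 := by
  ext i j
  rw [Matrix.mul_apply]
  have hXk := hb.entry_summable
  calc ∑ l, (1 - X) i l * neu X l j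
      = ∑ l, ∑' k, (1 - X) i l * (X ^ k) l j := by
        refine Finset.sum_congr rfl fun l _ => ?_
        rw [neu_apply, tsum_mul_left]
  _ = ∑' k, ∑ l, (1 - X) i l * (X ^ k) l j :=
        (Summable.tsum_finsetSum fun l _ => (hXk l j).mul_left _).symm
  _ = ∑' k, ((X ^ k) i j - (X ^ (k + 1)) i j) := by
        refine tsum_congr fun k => ?_
        rw [← Matrix.mul_apply, sub_mul, one_mul, ← pow_succ', Matrix.sub_apply]
  _ = (X ^ 0) i j := tsum_sub_succ (hXk i j)
  _ = (1 : Matrix (Fin n) (Fin n) ℝ) i j := by rw [pow_zero]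

lemma GeomBdd.neu_mul_one_sub {X : Matrix (Fin n) (Fin n) ℝ} (hb : GeomBdd X) :
    neu X * (1 - X) = 1 := mul_eq_one_comm.mp hb.one_sub_mul_neu

lemma GeomBdd.inv_one_sub {X : Matrix (Fin n) (Fin n) ℝ} (hb : GeomBdd X) :
    (1 - X)⁻¹ = neu X := Matrix.inv_eq_right_inv hb.one_sub_mul_neu

lemma neu_nonneg {X : Matrix (Fin n) (Fin n) ℝ} (hX : ∀ i j, 0 ≤ X i j) (i j : Fin n) :
    0 ≤ neu X i j :=
  tsum_nonneg fun k => pow_entries_nonneg hX k i j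

lemma one_le_neu {X : Matrix (Fin n) (Fin n) ℝ} (hb : GeomBdd X) (hX : ∀ i j, 0 ≤ X i j)
    (i j : Fin n) : (1 : Matrix (Fin n) (Fin n) ℝ) i j ≤ neu X i j := by
  have h0 : (1 : Matrix (Fin n) (Fin n) ℝ) i j = (X ^ 0) i j := by rw [pow_zero]
  rw [h0, neu_apply]
  exact Summable.le_tsum (hb.entry_summable i j) 0 fun k _ => pow_entries_nonneg hX k i j

lemma tendsto_sum_range_neu {X : Matrix (Fin n) (Fin n) ℝ} (hb : GeomBdd X) (i j : Fin n) :
    Tendsto (fun N => (∑ k ∈ Finset.range N, X ^ k) i j) atTop (𝓝 (neu X i j)) := by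
  simp only [Matrix.sum_apply]
  exact (hb.entry_summable i j).hasSum.tendsto_sum_nat

noncomputable def res (lam : ℂ) (T : Matrix (Fin n) (Fin n) ℝ) : Matrix (Fin n) (Fin n) ℂ :=
  Matrix.of fun i j => ∑' k, lam⁻¹ ^ (k + 1) * (CM (T ^ k)) i j

lemma res_apply (lam : ℂ) (T : Matrix (Fin n) (Fin n) ℝ) (i j : Fin n) :
    res lam T i j = ∑' k, lam⁻¹ ^ (k + 1) * (CM (T ^ k)) i j := rfl

section Res

variable {T : Matrix (Fin n) (Fin n) ℝ} {lam : ℂ}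

lemma res_summable_aux (hb : GeomBdd T) (hlam : 1 ≤ ‖lam‖) (i j : Fin n) :
    Summable fun k => lam⁻¹ ^ k * (CM (T ^ k)) i j := by
  obtain ⟨C, θ, hC0, hθ0, hθ1, hB⟩ := hb.entry_bound
  have hinv : ‖lam⁻¹‖ ≤ 1 := by
    rw [norm_inv]
    exact inv_le_one_of_one_le₀ hlam
  refine Summable.of_norm_bounded (g := fun k => C * θ ^ k)
    ((summable_geometric_of_lt_one hθ0 hθ1).mul_left C) fun k => ?_
  rw [norm_mul, norm_pow, CM_apply, Complex.norm_real, Real.norm_eq_abs]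
  calc ‖lam⁻¹‖ ^ k * |(T ^ k) i j| ≤ 1 * (C * θ ^ k) :=
    mul_le_mul (pow_le_one₀ (norm_nonneg _) hinv) (hB k i j) (abs_nonneg _) zero_le_one
  _ = C * θ ^ k := one_mul _

lemma res_summable (hb : GeomBdd T) (hlam : 1 ≤ ‖lam‖) (i j : Fin n) :
    Summable fun k => lam⁻¹ ^ (k + 1) * (CM (T ^ k)) i j := by
  refine ((res_summable_aux hb hlam i j).mul_left lam⁻¹).congr fun k => ?_
  rw [← mul_assoc, ← pow_succ']

lemma hlam_ne_zero (hlam : 1 ≤ ‖lam‖) : lam ≠ 0 := by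
  intro h
  rw [h, norm_zero] at hlam
  linarith

lemma res_left (hb : GeomBdd T) (hlam : 1 ≤ ‖lam‖) :
    (lam • (1 : Matrix (Fin n) (Fin n) ℂ) - CM T) * res lam T = 1 := by
  have hlam0 : lam ≠ 0 := hlam_ne_zero hlam
  ext i j
  rw [Matrix.mul_apply]
  calc ∑ l, (lam • (1 : Matrix (Fin n) (Fin n) ℂ) - CM T) i l * res lam T l j
      = ∑ l, ∑' k, (lam • (1 : Matrix (Fin n) (Fin n) ℂ) - CM T) i l *
          (lam⁻¹ ^ (k + 1) * (CM (T ^ k)) l j) := by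
        refine Finset.sum_congr rfl fun l _ => ?_
        rw [res_apply, tsum_mul_left]
  _ = ∑' k, ∑ l, (lam • (1 : Matrix (Fin n) (Fin n) ℂ) - CM T) i l *
          (lam⁻¹ ^ (k + 1) * (CM (T ^ k)) l j) :=
        (Summable.tsum_finsetSum fun l _ => ((res_summable hb hlam l j).mul_left _)).symm
  _ = ∑' k, (lam⁻¹ ^ k * (CM (T ^ k)) i j - lam⁻¹ ^ (k + 1) * (CM (T ^ (k + 1))) i j) := by
        refine tsum_congr fun k => ?_
        have h1 : ∀ l, (lam • (1 : Matrix (Fin n) (Fin n) ℂ) - CM T) i l *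
            (lam⁻¹ ^ (k + 1) * (CM (T ^ k)) l j) =
            lam⁻¹ ^ (k + 1) * ((lam • (1 : Matrix (Fin n) (Fin n) ℂ) - CM T) i l *
              (CM (T ^ k)) l j) := fun l => by ring
        rw [Finset.sum_congr rfl fun l _ => h1 l, ← Finset.mul_sum, ← Matrix.mul_apply]
        have hM : (lam • (1 : Matrix (Fin n) (Fin n) ℂ) - CM T) * CM (T ^ k) =
            lam • CM (T ^ k) - CM (T ^ (k + 1)) := by
          rw [sub_mul, Matrix.smul_mul, one_mul, ← CM_mul, ← pow_succ']
        rw [hM, Matrix.sub_apply, Matrix.smul_apply, smul_eq_mul, mul_sub, ← mul_assoc,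
          pow_succ, mul_assoc (lam⁻¹ ^ k), inv_mul_cancel₀ hlam0, mul_one]
  _ = lam⁻¹ ^ 0 * (CM (T ^ 0)) i j := tsum_sub_succ (res_summable_aux hb hlam i j)
  _ = (1 : Matrix (Fin n) (Fin n) ℂ) i j := by rw [pow_zero, pow_zero, CM_one, one_mul]

lemma res_right (hb : GeomBdd T) (hlam : 1 ≤ ‖lam‖) :
    res lam T * (lam • (1 : Matrix (Fin n) (Fin n) ℂ) - CM T) = 1 := by
  have hlam0 : lam ≠ 0 := hlam_ne_zero hlam
  ext i j
  rw [Matrix.mul_apply]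
  calc ∑ l, res lam T i l * (lam • (1 : Matrix (Fin n) (Fin n) ℂ) - CM T) l j
      = ∑ l, ∑' k, (lam⁻¹ ^ (k + 1) * (CM (T ^ k)) i l) *
          (lam • (1 : Matrix (Fin n) (Fin n) ℂ) - CM T) l j := by
        refine Finset.sum_congr rfl fun l _ => ?_
        rw [res_apply, tsum_mul_right]
  _ = ∑' k, ∑ l, (lam⁻¹ ^ (k + 1) * (CM (T ^ k)) i l) *
          (lam • (1 : Matrix (Fin n) (Fin n) ℂ) - CM T) l j :=
        (Summable.tsum_finsetSum fun l _ => ((res_summable hb hlam i l).mul_right _)).symm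
  _ = ∑' k, (lam⁻¹ ^ k * (CM (T ^ k)) i j - lam⁻¹ ^ (k + 1) * (CM (T ^ (k + 1))) i j) := by
        refine tsum_congr fun k => ?_
        have h1 : ∀ l, (lam⁻¹ ^ (k + 1) * (CM (T ^ k)) i l) *
            (lam • (1 : Matrix (Fin n) (Fin n) ℂ) - CM T) l j =
            lam⁻¹ ^ (k + 1) * ((CM (T ^ k)) i l *
              (lam • (1 : Matrix (Fin n) (Fin n) ℂ) - CM T) l j) := fun l => by ring
        rw [Finset.sum_congr rfl fun l _ => h1 l, ← Finset.mul_sum, ← Matrix.mul_apply]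
        have hM : CM (T ^ k) * (lam • (1 : Matrix (Fin n) (Fin n) ℂ) - CM T) =
            lam • CM (T ^ k) - CM (T ^ (k + 1)) := by
          rw [mul_sub, Matrix.mul_smul, mul_one, ← CM_mul, ← pow_succ]
        rw [hM, Matrix.sub_apply, Matrix.smul_apply, smul_eq_mul, mul_sub, ← mul_assoc,
          pow_succ, mul_assoc (lam⁻¹ ^ k), inv_mul_cancel₀ hlam0, mul_one]
  _ = lam⁻¹ ^ 0 * (CM (T ^ 0)) i j := tsum_sub_succ (res_summable_aux hb hlam i j)
  _ = (1 : Matrix (Fin n) (Fin n) ℂ) i j := by rw [pow_zero, pow_zero, CM_one, one_mul]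

lemma res_norm_le (hb : GeomBdd T) (hlam : 1 ≤ ‖lam‖) (hT : ∀ i j, 0 ≤ T i j) (i j : Fin n) :
    ‖res lam T i j‖ ≤ ‖lam‖⁻¹ * neu T i j := by
  have hinv1 : ‖lam‖⁻¹ ≤ 1 := inv_le_one_of_one_le₀ hlam
  have hinv0 : 0 ≤ ‖lam‖⁻¹ := inv_nonneg.mpr (norm_nonneg _)
  have hnorms : Summable fun k => ‖lam⁻¹ ^ (k + 1) * (CM (T ^ k)) i j‖ := by
    refine Summable.of_nonneg_of_le (fun k => norm_nonneg _) (fun k => ?_)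
      (((hb.entry_summable i j).mul_left ‖lam‖⁻¹))
    rw [norm_mul, norm_pow, norm_inv, CM_apply, Complex.norm_real, Real.norm_eq_abs,
      abs_of_nonneg (pow_entries_nonneg hT k i j)]
    refine mul_le_mul ?_ le_rfl (pow_entries_nonneg hT k i j) hinv0
    calc ‖lam‖⁻¹ ^ (k + 1) ≤ ‖lam‖⁻¹ ^ 1 :=
      pow_le_pow_of_le_one hinv0 hinv1 (Nat.one_le_iff_ne_zero.mpr (Nat.succ_ne_zero k))
    _ = ‖lam‖⁻¹ := pow_one _
  calc ‖res lam T i j‖ ≤ ∑' k, ‖lam⁻¹ ^ (k + 1) * (CM (T ^ k)) i j‖ :=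
    norm_tsum_le_tsum_norm hnorms
  _ ≤ ∑' k, ‖lam‖⁻¹ * (T ^ k) i j := by
      refine Summable.tsum_le_tsum (fun k => ?_) hnorms ((hb.entry_summable i j).mul_left ‖lam‖⁻¹)
      rw [norm_mul, norm_pow, norm_inv, CM_apply, Complex.norm_real, Real.norm_eq_abs,
        abs_of_nonneg (pow_entries_nonneg hT k i j)]
      refine mul_le_mul ?_ le_rfl (pow_entries_nonneg hT k i j) hinv0
      calc ‖lam‖⁻¹ ^ (k + 1) ≤ ‖lam‖⁻¹ ^ 1 :=
        pow_le_pow_of_le_one hinv0 hinv1 (Nat.one_le_iff_ne_zero.mpr (Nat.succ_ne_zero k))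
      _ = ‖lam‖⁻¹ := pow_one _
  _ = ‖lam‖⁻¹ * neu T i j := by rw [tsum_mul_left, neu_apply]

lemma isUnit_lam_one_sub (hb : GeomBdd T) (hlam : 1 ≤ ‖lam‖) :
    IsUnit (lam • (1 : Matrix (Fin n) (Fin n) ℂ) - CM T) :=
  isUnit_iff_exists.mpr ⟨res lam T, res_left hb hlam, res_right hb hlam⟩

end Res

lemma mul_right_mono {X Y W : Matrix (Fin n) (Fin n) ℝ} (hW : ∀ i j, 0 ≤ W i j)
    (h : ∀ i j, X i j ≤ Y i j) : ∀ i j, (X * W) i j ≤ (Y * W) i j := fun i j => by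
  rw [Matrix.mul_apply, Matrix.mul_apply]
  exact Finset.sum_le_sum fun l _ => mul_le_mul_of_nonneg_right (h i l) (hW l j)

lemma norm_le_sum_real (A : Matrix (Fin n) (Fin n) ℝ) : ‖A‖ ≤ ∑ i, ∑ j, |A i j| := by
  have h := nnnorm_le_sum A
  have h2 : ((‖A‖₊ : ℝ≥0) : ℝ) ≤ ((∑ i, ∑ j, ‖A i j‖₊ : ℝ≥0) : ℝ) := by exact_mod_cast h
  refine le_trans h2 (le_of_eq ?_)
  push_cast
  simp [Real.norm_eq_abs]

end SRAux

open SRAux in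
theorem scaled_specRad_one_general {n : ℕ} (T F : Matrix (Fin n) (Fin n) ℝ)
    (hT : ∀ i j, 0 ≤ T i j) (hF : ∀ i j, 0 ≤ F i j)
    (hρ : specRad T < 1)
    (R₀ : ℝ) (hR : R₀ = specRad (F * (1 - T)⁻¹)) (hRpos : 0 < R₀) :
    specRad (T + R₀⁻¹ • F) = 1 := by
  classical
  rcases Nat.eq_zero_or_pos n with hn0 | hn
  · -- trivial case n = 0
    exfalso
    subst hn0
    have hall : ∀ x : Matrix (Fin 0) (Fin 0) ℂ, x = 1 := fun x => by
      ext i j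
      exact absurd i.2 (by omega)
    have hσ : spectrum ℂ ((F * (1 - T)⁻¹).map Complex.ofReal) = ∅ := by
      ext z
      simp only [Set.mem_empty_iff_false, iff_false]
      intro hz
      rw [spectrum.mem_iff] at hz
      exact hz (by
        rw [hall (algebraMap ℂ (Matrix (Fin 0) (Fin 0) ℂ) z -
          (F * (1 - T)⁻¹).map Complex.ofReal)]
        exact isUnit_one)
    have h0 : specRad (F * (1 - T)⁻¹) = 0 := by
      rw [specRad, spectralRadius, hσ]
      simp
    rw [hR, h0] at hRpos
    exact lt_irrefl 0 hRpos
  have : Nonempty (Fin n) := Fin.pos_iff_nonempty.mp hn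
  have hR0inv : (0:ℝ) ≤ R₀⁻¹ := inv_nonneg.mpr hRpos.le
  -- spectral radius of T
  have hρT : spectralRadius ℂ (CM T) < 1 := by
    have hne := spectralRadius_ne_top (CM T)
    have h1 : (spectralRadius ℂ (CM T)).toReal < (1 : ℝ≥0∞).toReal := by
      rw [ENNReal.toReal_one]; exact hρ
    exact (ENNReal.toReal_lt_toReal hne ENNReal.one_ne_top).mp h1
  have hbT : GeomBdd T := geomBdd_of_lt_one hρT
  have hUinv : (1 - T)⁻¹ = neu T := hbT.inv_one_sub
  have hUnn : ∀ i j, 0 ≤ neu T i j := fun i j => neu_nonneg hT i j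
  have hρFU : spectralRadius ℂ (CM (F * neu T)) = ENNReal.ofReal R₀ := by
    have h1 : (spectralRadius ℂ (CM (F * neu T))).toReal = R₀ := by
      rw [hR, hUinv]
      rfl
    rw [← h1, ENNReal.ofReal_toReal (spectralRadius_ne_top _)]
  set B : Matrix (Fin n) (Fin n) ℝ := R₀⁻¹ • F with hBdef
  have hBnn : ∀ i j, 0 ≤ B i j := fun i j => by
    rw [hBdef, Matrix.smul_apply, smul_eq_mul]
    exact mul_nonneg hR0inv (hF i j)
  set M : Matrix (Fin n) (Fin n) ℝ := T + B with hM
  have hMnn : ∀ i j, 0 ≤ M i j := fun i j => by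
    rw [hM, Matrix.add_apply]
    exact add_nonneg (hT i j) (hBnn i j)
  -- spectral radius of A' = B * neu T is 1
  set A' : Matrix (Fin n) (Fin n) ℝ := B * neu T with hA'def
  have hA'nn : ∀ i j, 0 ≤ A' i j := mul_entries_nonneg hBnn hUnn
  have hρA' : spectralRadius ℂ (CM A') = 1 := by
    have hsm : A' = R₀⁻¹ • (F * neu T) := by rw [hA'def, hBdef, Matrix.smul_mul]
    have hc0 : ((R₀⁻¹ : ℝ) : ℂ) ≠ 0 := by
      simp only [ne_eq, Complex.ofReal_eq_zero]
      exact inv_ne_zero hRpos.ne'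
    rw [hsm, CM_smul, spectralRadius_smul hc0, hρFU]
    have hnn : (‖((R₀⁻¹ : ℝ) : ℂ)‖₊ : ℝ≥0∞) = ENNReal.ofReal R₀⁻¹ := by
      rw [Complex.nnnorm_real]
      exact (Real.enorm_eq_ofReal hR0inv)
    rw [hnn, ← ENNReal.ofReal_mul hR0inv, inv_mul_cancel₀ hRpos.ne', ENNReal.ofReal_one]
  -- upper bound
  have hupper : spectralRadius ℂ (CM M) ≤ 1 := by
    refine iSup₂_le fun z hz => ?_
    by_contra hgt
    push_neg at hgt
    have hz1 : 1 < ‖z‖ := by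
      have : (1 : ℝ≥0) < ‖z‖₊ := by exact_mod_cast hgt
      exact_mod_cast this
    have hlam : 1 ≤ ‖z‖ := hz1.le
    have hfac : algebraMap ℂ (Matrix (Fin n) (Fin n) ℂ) z - CM M =
        (1 - CM B * res z T) * (z • (1 : Matrix (Fin n) (Fin n) ℂ) - CM T) := by
      rw [sub_mul, one_mul, mul_assoc, res_right hbT hlam, mul_one,
        Algebra.algebraMap_eq_smul_one, hM, CM_add]
      abel
    have hcmp : spectralRadius ℂ (CM B * res z T) ≤
        (((‖z‖⁻¹ * R₀⁻¹).toNNReal : ℝ≥0) : ℝ≥0∞) * spectralRadius ℂ (CM (F * neu T)) := by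
      refine spectralRadius_le_scale (by positivity) (mul_entries_nonneg hF hUnn)
        fun i j => ?_
      rw [Matrix.mul_apply]
      refine le_trans (norm_sum_le _ _) ?_
      have hterm : ∀ l, ‖(CM B) i l * res z T l j‖ ≤
          R₀⁻¹ * F i l * (‖z‖⁻¹ * neu T l j) := fun l => by
        rw [norm_mul, CM_apply, Complex.norm_real, Real.norm_eq_abs, hBdef,
          Matrix.smul_apply, smul_eq_mul, abs_of_nonneg (mul_nonneg hR0inv (hF i l))]
        exact mul_le_mul le_rfl (res_norm_le hbT hlam hT l j) (norm_nonneg _)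
          (mul_nonneg hR0inv (hF i l))
      refine le_trans (Finset.sum_le_sum fun l _ => hterm l) (le_of_eq ?_)
      rw [Matrix.mul_apply, Finset.mul_sum]
      refine Finset.sum_congr rfl fun l _ => ?_
      ring
    have hlt : spectralRadius ℂ (CM B * res z T) < 1 := by
      refine lt_of_le_of_lt hcmp ?_
      rw [hρFU]
      have hco : (((‖z‖⁻¹ * R₀⁻¹).toNNReal : ℝ≥0) : ℝ≥0∞) = ENNReal.ofReal (‖z‖⁻¹ * R₀⁻¹) := rfl
      rw [hco, ← ENNReal.ofReal_mul (by positivity), mul_assoc,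
        inv_mul_cancel₀ hRpos.ne', mul_one, ← ENNReal.ofReal_one]
      exact ENNReal.ofReal_lt_ofReal_iff (by norm_num) |>.mpr (inv_lt_one_of_one_lt₀ hz1)
    have hunit1 : IsUnit (1 - CM B * res z T) := by
      have h1mem : (1 : ℂ) ∉ spectrum ℂ (CM B * res z T) := by
        intro hmem
        have hle : (1 : ℝ≥0∞) ≤ spectralRadius ℂ (CM B * res z T) := by
          have h2 := le_iSup₂ (f := fun k (_ : k ∈ spectrum ℂ (CM B * res z T)) =>
            (‖k‖₊ : ℝ≥0∞)) (1 : ℂ) hmem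
          simpa [spectralRadius] using h2
        exact absurd (lt_of_le_of_lt hle hlt) (lt_irrefl _)
      have h2 := spectrum.notMem_iff.mp h1mem
      rwa [Algebra.algebraMap_eq_smul_one, one_smul] at h2
    have hunit := hunit1.mul (isUnit_lam_one_sub hbT hlam)
    rw [← hfac] at hunit
    exact (spectrum.notMem_iff.mpr hunit) hz
  -- lower bound
  have hlower : ¬ spectralRadius ℂ (CM M) < 1 := by
    intro hMlt
    have hbM : GeomBdd M := geomBdd_of_lt_one hMlt
    set S : Matrix (Fin n) (Fin n) ℝ := neu M with hSdef
    have hSnn : ∀ i j, 0 ≤ S i j := fun i j => neu_nonneg hMnn i j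
    have hrec : S = 1 + (S * T + S * B) := by
      have h1 : S * (1 - M) = 1 := hbM.neu_mul_one_sub
      have h2 : S - S * M = 1 := by
        rw [← h1, Matrix.mul_sub, Matrix.mul_one]
      have h3 : S = 1 + S * M := by
        rw [← h2]; abel
      conv_lhs => rw [h3]
      rw [hM, Matrix.mul_add]
  -- step 1 : partial geometric sums
    have step1 : ∀ N, ∀ i j, ((1 + S * B) * ∑ k ∈ Finset.range N, T ^ k) i j ≤ S i j := by
      intro N
      induction N with
      | zero =>
        intro i j
        simp only [Finset.range_zero, Finset.sum_empty, Matrix.mul_zero, Matrix.zero_apply]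
        exact hSnn i j
      | succ N ih =>
        intro i j
        have hsum : (∑ k ∈ Finset.range (N + 1), T ^ k) =
            (∑ k ∈ Finset.range N, T ^ k) * T + 1 := by
          rw [Finset.sum_range_succ' (fun k => T ^ k) N]
          simp only [pow_succ, pow_zero]
          rw [Finset.sum_mul]
        rw [hsum, Matrix.mul_add, Matrix.mul_one, ← Matrix.mul_assoc, Matrix.add_apply]
        have h4 : ((1 + S * B) * (∑ k ∈ Finset.range N, T ^ k) * T) i j ≤ (S * T) i j :=
          mul_right_mono hT ih i j
        have h5 : (S * T) i j + (1 + S * B) i j = S i j := by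
          conv_rhs => rw [hrec]
          rw [Matrix.add_apply, Matrix.add_apply, Matrix.add_apply]
          ring
        rw [← h5]
        exact add_le_add h4 le_rfl
  -- step 2 : pass to the limit
    have step2 : ∀ i j, ((1 + S * B) * neu T) i j ≤ S i j := by
      intro i j
      have htend : Tendsto (fun N => ((1 + S * B) * ∑ k ∈ Finset.range N, T ^ k) i j)
          atTop (𝓝 (((1 + S * B) * neu T) i j)) := by
        simp only [Matrix.mul_apply]
        exact tendsto_finset_sum _ fun l _ =>
          (tendsto_sum_range_neu hbT l j).const_mul ((1 + S * B) i l)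
      exact le_of_tendsto htend (Filter.Eventually.of_forall fun N => step1 N i j)
    have hkey : ∀ i j, (neu T) i j + (S * A') i j ≤ S i j := by
      intro i j
      have hexp : (1 + S * B) * neu T = neu T + S * A' := by
        rw [Matrix.add_mul, Matrix.one_mul, hA'def, Matrix.mul_assoc]
      have := step2 i j
      rwa [hexp, Matrix.add_apply] at this
  -- step 4 : iterate
    have step4 : ∀ N, ∀ i j,
        ((∑ m ∈ Finset.range N, neu T * A' ^ m) + S * A' ^ N) i j ≤ S i j := by
      intro N
      induction N with
      | zero =>
        intro i j
        simp only [Finset.range_zero, Finset.sum_empty, pow_zero, Matrix.mul_one,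
          Matrix.add_apply, Matrix.zero_apply, zero_add]
        exact le_rfl
      | succ N ih =>
        intro i j
        have h6 : ∀ i j, ((neu T + S * A') * A' ^ N) i j ≤ (S * A' ^ N) i j :=
          mul_right_mono (pow_entries_nonneg hA'nn N) (fun i j => by
            have := hkey i j
            rwa [← Matrix.add_apply] at this)
        have h7 : (neu T + S * A') * A' ^ N = neu T * A' ^ N + S * A' ^ (N + 1) := by
          rw [Matrix.add_mul, Matrix.mul_assoc, ← pow_succ']
        rw [Finset.sum_range_succ, Matrix.add_apply, Matrix.add_apply]
        have h8 : (neu T * A' ^ N) i j + (S * A' ^ (N + 1)) i j ≤ (S * A' ^ N) i j := by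
          have := h6 i j
          rwa [h7, Matrix.add_apply] at this
        calc (∑ m ∈ Finset.range N, neu T * A' ^ m) i j + (neu T * A' ^ N) i j +
            (S * A' ^ (N + 1)) i j
            = (∑ m ∈ Finset.range N, neu T * A' ^ m) i j +
              ((neu T * A' ^ N) i j + (S * A' ^ (N + 1)) i j) := by ring
        _ ≤ (∑ m ∈ Finset.range N, neu T * A' ^ m) i j + (S * A' ^ N) i j :=
            add_le_add le_rfl h8
        _ = ((∑ m ∈ Finset.range N, neu T * A' ^ m) + S * A' ^ N) i j := by
            rw [Matrix.add_apply]
        _ ≤ S i j := ih i j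
  -- step 5 : partial sums of A' powers are bounded
    have step5 : ∀ N i j, ∑ m ∈ Finset.range N, (A' ^ m) i j ≤ S i j := by
      intro N i j
      have hd : ∀ m, (A' ^ m) i j ≤ (neu T * A' ^ m) i j := by
        intro m
        have hWnn := pow_entries_nonneg hA'nn m
        have h9 : neu T i i * (A' ^ m) i j ≤ ∑ l, neu T i l * (A' ^ m) l j :=
          Finset.single_le_sum (f := fun l => neu T i l * (A' ^ m) l j)
            (fun l _ => mul_nonneg (hUnn i l) (hWnn l j)) (Finset.mem_univ i)
        have h10 : (A' ^ m) i j ≤ neu T i i * (A' ^ m) i j := by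
          have h11 : (1:ℝ) ≤ neu T i i := by
            have := one_le_neu hbT hT i i
            rwa [Matrix.one_apply_eq] at this
          exact le_mul_of_one_le_left (hWnn i j) h11
        rw [Matrix.mul_apply]
        exact le_trans h10 h9
      calc ∑ m ∈ Finset.range N, (A' ^ m) i j
          ≤ ∑ m ∈ Finset.range N, (neu T * A' ^ m) i j :=
            Finset.sum_le_sum fun m _ => hd m
      _ = (∑ m ∈ Finset.range N, neu T * A' ^ m) i j := by
            rw [Matrix.sum_apply]
      _ ≤ ((∑ m ∈ Finset.range N, neu T * A' ^ m) + S * A' ^ N) i j := by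
            rw [Matrix.add_apply]
            have : 0 ≤ (S * A' ^ N) i j :=
              mul_entries_nonneg hSnn (pow_entries_nonneg hA'nn N) i j
            linarith
      _ ≤ S i j := step4 N i j
  -- step 6 : powers of A' tend to 0
    have hsumm : ∀ i j, Summable fun m => (A' ^ m) i j := fun i j =>
      summable_of_sum_range_le (fun m => pow_entries_nonneg hA'nn m i j)
        (fun N => step5 N i j)
    have htot : Tendsto (fun m => ∑ i, ∑ j, (A' ^ m) i j) atTop (𝓝 0) := by
      have h12 : Tendsto (fun m => ∑ i, ∑ j, (A' ^ m) i j) atTop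
          (𝓝 (∑ i : Fin n, ∑ j : Fin n, (0:ℝ))) := by
        refine tendsto_finset_sum _ fun i _ => tendsto_finset_sum _ fun j _ => ?_
        exact (hsumm i j).tendsto_atTop_zero
      simpa using h12
    have hev : ∀ᶠ m in atTop, ∑ i, ∑ j, (A' ^ m) i j < 1 :=
      htot.eventually_lt_const (by norm_num)
    obtain ⟨m, hm1, hm2⟩ := (hev.and (eventually_ge_atTop 1)).exists
    have hnrm : ‖(CM A') ^ m‖₊ < 1 := by
      rw [← CM_pow, nnnorm_CM]
      have h13 : ‖A' ^ m‖ < 1 := by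
        refine lt_of_le_of_lt (norm_le_sum_real _) ?_
        refine lt_of_le_of_lt (le_of_eq ?_) hm1
        refine Finset.sum_congr rfl fun i _ => Finset.sum_congr rfl fun j _ => ?_
        exact abs_of_nonneg (pow_entries_nonneg hA'nn m i j)
      have : (‖A' ^ m‖₊ : ℝ) < 1 := by rwa [coe_nnnorm]
      exact_mod_cast this
    have hlt1 : spectralRadius ℂ (CM A') < 1 :=
      spectralRadius_lt_one_of_pow (Nat.one_le_iff_ne_zero.mp hm2) hnrm
    rw [hρA'] at hlt1
    exact lt_irrefl _ hlt1
  -- combine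
  have hfin : spectralRadius ℂ (CM M) = 1 := le_antisymm hupper (not_lt.mp hlower)
  have hdef : specRad (T + R₀⁻¹ • F) = (spectralRadius ℂ (CM M)).toReal := rfl
  rw [hdef, hfin, ENNReal.toReal_one]
end
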